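/- arXiv:2605.22062 — 5 statements merged into one kernel-verified Lean document; each statement's English description precedes it below -/
import Mathlib

section
/- For any u, v in the circle 𝕋 = ℝ/ℤ with q = [v-u]₁ the counterclockwise arc length in [0,1), the integral over b ∈ [0,1) of |[u-b]₁ - [v-b]₁| equals 2q(1-q). -/
open MeasureTheory Real

/-- The unique representative in `[0,1)` of a point of the circle `ℝ/ℤ`. -/
noncomputable def frac (x : UnitAddCircle) : ℝ := (AddCircle.equivIco 1 0 x : ℝ)

lemma frac_coe (x : ℝ) : frac (x : UnitAddCircle) = Int.fract x := by
  simp [frac, AddCircle.coe_equivIco_mk_apply]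

/-- for `u, v` on the circle with `q = [v-u]₁`, averaging the linearized
absolute rank distance `|[u-b]₁ - [v-b]₁|` over the cut point `b ∈ [0,1)` gives `2q(1-q)`. -/
theorem stmt1 (u v : UnitAddCircle) (q : ℝ) (hq : q = frac (v - u)) :
    ∫ b in Set.Ico (0:ℝ) 1, |frac (u - (b : UnitAddCircle)) - frac (v - (b : UnitAddCircle))|
      = 2 * q * (1 - q) := by
  obtain ⟨u₀, rfl⟩ := QuotientAddGroup.mk_surjective u
  obtain ⟨v₀, rfl⟩ := QuotientAddGroup.mk_surjective v
  have hqv : q = Int.fract (v₀ - u₀) := by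
    rw [hq, ← QuotientAddGroup.mk_sub, frac_coe]
  have hq0 : 0 ≤ q := hqv ▸ Int.fract_nonneg _
  have hq1 : q < 1 := hqv ▸ Int.fract_lt_one _
  set F : ℝ → ℝ := fun t => |Int.fract t - Int.fract (t + q)| with hF
  -- rewrite integrand
  have hint : ∀ b : ℝ,
      |frac ((u₀ : UnitAddCircle) - (b : UnitAddCircle)) -
        frac ((v₀ : UnitAddCircle) - (b : UnitAddCircle))| = F (u₀ - b) := by
    intro b
    have h1 : ((u₀ : UnitAddCircle) - (b : UnitAddCircle)) = ((u₀ - b : ℝ) : UnitAddCircle) := by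
      rw [← QuotientAddGroup.mk_sub]
    have h2 : ((v₀ : UnitAddCircle) - (b : UnitAddCircle)) = ((v₀ - b : ℝ) : UnitAddCircle) := by
      rw [← QuotientAddGroup.mk_sub]
    rw [h1, h2, frac_coe, frac_coe, hF]
    have : v₀ - b = (u₀ - b + q) + (⌊v₀ - u₀⌋ : ℤ) := by
      rw [hqv, Int.fract]; ring
    rw [this, Int.fract_add_intCast]
  have hper : Function.Periodic F 1 := by
    intro t
    simp only [hF]
    rw [Int.fract_add_one, show t + 1 + q = (t + q) + 1 by ring, Int.fract_add_one]
  calc ∫ b in Set.Ico (0:ℝ) 1,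
        |frac ((u₀ : UnitAddCircle) - (b : UnitAddCircle)) -
          frac ((v₀ : UnitAddCircle) - (b : UnitAddCircle))|
      = ∫ b in Set.Ico (0:ℝ) 1, F (u₀ - b) := by
        exact setIntegral_congr_fun measurableSet_Ico fun b _ => hint b
    _ = ∫ b in (0:ℝ)..1, F (u₀ - b) := by
        rw [integral_Ico_eq_integral_Ioo, ← integral_Ioc_eq_integral_Ioo,
          intervalIntegral.integral_of_le zero_le_one]
    _ = ∫ t in (u₀ - 1)..(u₀ - 0), F t := intervalIntegral.integral_comp_sub_left F u₀
    _ = ∫ t in (0:ℝ)..1, F t := by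
        have := hper.intervalIntegral_add_eq (u₀ - 1) 0
        simpa using this
    _ = ∫ t in Set.Ico (0:ℝ) 1, F t := by
        rw [integral_Ico_eq_integral_Ioo, ← integral_Ioc_eq_integral_Ioo,
          intervalIntegral.integral_of_le zero_le_one]
    _ = 2 * q * (1 - q) := by
        have hsplit : Set.Ico (0:ℝ) 1 = Set.Ico 0 (1 - q) ∪ Set.Ico (1 - q) 1 :=
          (Set.Ico_union_Ico_eq_Ico (by linarith) (by linarith)).symm
        have e1 : Set.EqOn F (fun _ => q) (Set.Ico 0 (1 - q)) := by
          intro t ht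
          obtain ⟨ht0, ht1⟩ := ht
          have hft : Int.fract t = t := Int.fract_eq_self.2 ⟨ht0, by linarith⟩
          have hftq : Int.fract (t + q) = t + q :=
            Int.fract_eq_self.2 ⟨by linarith, by linarith⟩
          simp [hF, hft, hftq, abs_of_nonpos, hq0]
        have e2 : Set.EqOn F (fun _ => 1 - q) (Set.Ico (1 - q) 1) := by
          intro t ht
          obtain ⟨ht0, ht1⟩ := ht
          have hft : Int.fract t = t := Int.fract_eq_self.2 ⟨by linarith, ht1⟩
          have hftq : Int.fract (t + q) = t + q - 1 := by
            rw [← Int.fract_sub_intCast (t + q) 1]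
            push_cast
            exact Int.fract_eq_self.2 ⟨by linarith, by linarith⟩
          rw [hF]
          simp only [hft, hftq]
          rw [abs_of_nonneg (by linarith)]
          ring
        have i1 : IntegrableOn F (Set.Ico 0 (1 - q)) := by
          apply (integrableOn_const (C := q) measure_Ico_lt_top.ne enorm_ne_top).congr_fun
            (fun t ht => (e1 ht).symm) measurableSet_Ico
        have i2 : IntegrableOn F (Set.Ico (1 - q) 1) := by
          apply (integrableOn_const (C := 1 - q) measure_Ico_lt_top.ne enorm_ne_top).congr_fun
            (fun t ht => (e2 ht).symm) measurableSet_Ico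
        rw [hsplit, setIntegral_union (Set.Ico_disjoint_Ico_same)
          measurableSet_Ico i1 i2,
          setIntegral_congr_fun measurableSet_Ico e1,
          setIntegral_congr_fun measurableSet_Ico e2]
        simp only [setIntegral_const, Real.volume_Ico, smul_eq_mul]
        rw [Real.volume_real_Ico_of_le (by linarith), Real.volume_real_Ico_of_le (by linarith)]
        ring
end

section
/- Let K be a probability measure on the circle 𝕋 = ℝ/ℤ such that ∫∫ H(u,v) K(du) K(dv) = 0, where H(u,v) = [v-u]₁(1-[v-u]₁). Then K is a Dirac point mass. Conversely, every Dirac point mass makes this double integral zero. -/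
open MeasureTheory Real

/-- The circular rank discrepancy `H(u,v) = [v-u]₁ (1 - [v-u]₁)`. -/
noncomputable def Hdisc (u v : UnitAddCircle) : ℝ := frac (v - u) * (1 - frac (v - u))

lemma frac_mem (x : UnitAddCircle) : frac x ∈ Set.Ico (0:ℝ) 1 := by
  have := (AddCircle.equivIco 1 0 x).2
  simpa [frac] using this

lemma frac_eq_zero_iff (x : UnitAddCircle) : frac x = 0 ↔ x = 0 := by
  constructor
  · intro h
    have : ((AddCircle.equivIco 1 0 x : ℝ) : UnitAddCircle) = x :=
      (AddCircle.equivIco 1 0).symm_apply_apply x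
    have h' : ((AddCircle.equivIco 1 0) x : ℝ) = 0 := h
    rw [← this, h']
    norm_num
  · rintro rfl
    have : ((0:ℝ) : UnitAddCircle) = 0 := by norm_num
    rw [frac, ← this, AddCircle.coe_equivIco_mk_apply]
    norm_num

lemma measurable_frac : Measurable frac := by
  have : frac = (fun y : Set.Ico (0:ℝ) (0+1) => (y : ℝ))
      ∘ (AddCircle.measurableEquivIco (T := 1) (a := 0)) := by
    funext x; rfl
  rw [this]
  exact measurable_subtype_coe.comp
    (AddCircle.measurableEquivIco (T := 1) (a := 0)).measurable

lemma Hdisc_nonneg (u v : UnitAddCircle) : 0 ≤ Hdisc u v := by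
  have h := frac_mem (v - u)
  exact mul_nonneg h.1 (by linarith [h.2])

lemma Hdisc_le_one (u v : UnitAddCircle) : Hdisc u v ≤ 1 := by
  have h := frac_mem (v - u)
  unfold Hdisc; nlinarith [h.1, h.2]

lemma Hdisc_eq_zero_iff (u v : UnitAddCircle) : Hdisc u v = 0 ↔ v = u := by
  have h := frac_mem (v - u)
  constructor
  · intro hz
    rcases mul_eq_zero.1 hz with h0 | h1
    · have := (frac_eq_zero_iff _).1 h0
      rwa [sub_eq_zero] at this
    · linarith [h.2]
  · rintro rfl
    simp [Hdisc, (frac_eq_zero_iff 0).2 rfl]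

lemma measurable_Hdisc : Measurable (Function.uncurry Hdisc) := by
  have : Function.uncurry Hdisc =
      (fun t => frac t * (1 - frac t)) ∘ (fun p : UnitAddCircle × UnitAddCircle => p.2 - p.1) := by
    funext p; rfl
  rw [this]
  exact (measurable_frac.mul ((measurable_const.sub measurable_frac))).comp
    (measurable_snd.sub measurable_fst)

/-- a probability measure `K` on the circle satisfies
`∫∫ H(u,v) K(du) K(dv) = 0` if and only if `K` is a Dirac point mass. -/
theorem stmt4 (K : Measure UnitAddCircle) [IsProbabilityMeasure K] :
    ((∫ u, ∫ v, Hdisc u v ∂K ∂K) = 0 → ∃ x : UnitAddCircle, K = Measure.dirac x) ∧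
    (∀ x : UnitAddCircle, ∫ u, ∫ v, Hdisc u v ∂(Measure.dirac x) ∂(Measure.dirac x) = 0) := by
  constructor
  · intro h0
    have hint : ∀ u : UnitAddCircle, Integrable (fun v => Hdisc u v) K := by
      intro u
      refine Integrable.mono' (integrable_const 1) ?_ ?_
      · exact ((measurable_Hdisc.comp measurable_prodMk_left)).aestronglyMeasurable
      · filter_upwards with v
        rw [Real.norm_of_nonneg (Hdisc_nonneg u v)]
        exact Hdisc_le_one u v
    set g : UnitAddCircle → ℝ := fun u => ∫ v, Hdisc u v ∂K with hg
    have hgm : StronglyMeasurable g :=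
      (measurable_Hdisc.stronglyMeasurable).integral_prod_right'
    have hgnn : 0 ≤ g := fun u => integral_nonneg (fun v => Hdisc_nonneg u v)
    have hgint : Integrable g K := by
      refine Integrable.mono' (integrable_const 1) hgm.aestronglyMeasurable ?_
      filter_upwards with u
      rw [Real.norm_of_nonneg (hgnn u)]
      have h1 : g u ≤ ∫ _v, (1:ℝ) ∂K :=
        integral_mono (hint u) (integrable_const 1) (fun v => Hdisc_le_one u v)
      simpa using h1
    have hg0 : g =ᵐ[K] 0 := (integral_eq_zero_iff_of_nonneg hgnn hgint).1 h0
    haveI : (ae K).NeBot := ae_neBot.2 (IsProbabilityMeasure.ne_zero K)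
    obtain ⟨u, hu⟩ := hg0.exists
    have hH0 : (fun v => Hdisc u v) =ᵐ[K] 0 :=
      (integral_eq_zero_iff_of_nonneg (fun v => Hdisc_nonneg u v) (hint u)).1 hu
    have hae : ∀ᵐ v ∂K, v = u := by
      filter_upwards [hH0] with v hv
      exact (Hdisc_eq_zero_iff u v).1 hv
    have hcompl : K {u}ᶜ = 0 := by
      rw [ae_iff] at hae
      convert hae using 2
      ext; simp
    have hKu : K {u} = 1 := by
      rwa [prob_compl_eq_zero_iff (measurableSet_singleton u)] at hcompl
    refine ⟨u, ?_⟩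
    ext s hs
    have hsplit : K (s ∩ {u}) + K (s \ {u}) = K s := measure_inter_add_diff s (measurableSet_singleton u)
    have hdiff : K (s \ {u}) = 0 :=
      le_antisymm (le_trans (measure_mono (Set.diff_subset_compl s {u})) hcompl.le) zero_le
    by_cases hus : u ∈ s
    · have : s ∩ {u} = {u} := by
        ext y; simp (config := {contextual := true}) [Set.mem_inter_iff]; rintro rfl; exact hus
      rw [Measure.dirac_apply' u hs, Set.indicator_of_mem hus, ← hsplit, this, hdiff, hKu]
      simp
    · have : s ∩ {u} = ∅ := by
        ext y; simp; rintro hy rfl; exact hus hy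
      rw [Measure.dirac_apply' u hs, Set.indicator_of_notMem hus, ← hsplit, this, hdiff]
      simp
  · intro x
    rw [integral_dirac, integral_dirac]
    simp [Hdisc, sub_self, (frac_eq_zero_iff 0).2 rfl]
end

section
/- Let π = (π₁,...,πₙ) be a uniformly random cyclic listing of {0,1,...,n-1} (with π_{n+1} = π₁), and for adjacent edges set D_k = (π_{k+1} - π_k) mod n and Z_k = D_k(n - D_k). Then for two adjacent distinct edges, Cov(Z_j, Z_k) = -n(n-3)(n+1)/180. -/
open Filter

/-- Cyclic rank increment `D_k = (π_{k+1} - π_k) mod n` of the cyclic listing `σ`. -/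
def cycD (n : ℕ) [NeZero n] (σ : Equiv.Perm (Fin n)) (k : Fin n) : ℕ :=
  ((σ (k + 1) - σ k : Fin n) : ℕ)

/-- The edge weight `Z_k = D_k (n - D_k)`. -/
noncomputable def cycZ (n : ℕ) [NeZero n] (σ : Equiv.Perm (Fin n)) (k : Fin n) : ℝ :=
  (cycD n σ k : ℝ) * ((n : ℝ) - (cycD n σ k : ℝ))

/-- Expectation with respect to the uniform distribution on all `n!` cyclic listings. -/
noncomputable def permE (n : ℕ) (f : Equiv.Perm (Fin n) → ℝ) : ℝ :=
  (∑ σ : Equiv.Perm (Fin n), f σ) / (Nat.factorial n : ℝ)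

open Finset

namespace Stmt11Aux

noncomputable def fZ (n : ℕ) [NeZero n] (d : Fin n) : ℝ :=
  ((d : ℕ) : ℝ) * ((n : ℝ) - ((d : ℕ) : ℝ))

lemma cycZ_eq_fZ (n : ℕ) [NeZero n] (σ : Equiv.Perm (Fin n)) (k : Fin n) :
    cycZ n σ k = fZ n (σ (k + 1) - σ k) := rfl

lemma fZ_zero (n : ℕ) [NeZero n] : fZ n 0 = 0 := by simp [fZ]

lemma fZ_neg (n : ℕ) [NeZero n] {d : Fin n} (hd : d ≠ 0) : fZ n (-d) = fZ n d := by
  have hlt : (d : ℕ) < n := d.isLt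
  have hpos : 0 < (d : ℕ) :=
    Nat.pos_of_ne_zero (fun h => hd (Fin.ext (by simp [h])))
  have hval : ((-d : Fin n) : ℕ) = n - (d : ℕ) := by
    rw [Fin.coe_neg]
    exact Nat.mod_eq_of_lt (by omega)
  have hcast : ((n - (d : ℕ) : ℕ) : ℝ) = (n : ℝ) - ((d : ℕ) : ℝ) := by
    push_cast [Nat.cast_sub hlt.le]; ring
  rw [fZ, fZ, hval, hcast]; ring

/-- Existence of a permutation taking prescribed values at three distinct points. -/
lemma exists_perm3 {n : ℕ} [NeZero n] {p₀ p₁ p₂ a b c : Fin n} (h01 : p₀ ≠ p₁) (h02 : p₀ ≠ p₂)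
    (h12 : p₁ ≠ p₂) (hab : a ≠ b) (hac : a ≠ c) (hbc : b ≠ c) :
    ∃ σ : Equiv.Perm (Fin n), σ p₀ = a ∧ σ p₁ = b ∧ σ p₂ = c := by
  classical
  set σ₁ : Equiv.Perm (Fin n) := Equiv.swap p₀ a with hσ₁
  have e1 : σ₁ p₀ = a := Equiv.swap_apply_left _ _
  set σ₂ : Equiv.Perm (Fin n) := σ₁.trans (Equiv.swap (σ₁ p₁) b) with hσ₂
  have e2b : σ₂ p₁ = b := by simp [hσ₂, Equiv.trans_apply]
  have hane1 : a ≠ σ₁ p₁ := by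
    intro h
    exact h01 (σ₁.injective (e1.trans h))
  have e2a : σ₂ p₀ = a := by
    rw [hσ₂]; simp only [Equiv.trans_apply, e1]
    exact Equiv.swap_apply_of_ne_of_ne hane1 hab
  set σ₃ : Equiv.Perm (Fin n) := σ₂.trans (Equiv.swap (σ₂ p₂) c) with hσ₃
  have e3c : σ₃ p₂ = c := by simp [hσ₃, Equiv.trans_apply]
  have e3a : σ₃ p₀ = a := by
    rw [hσ₃]; simp only [Equiv.trans_apply, e2a]
    exact Equiv.swap_apply_of_ne_of_ne
      (fun h => h02 (σ₂.injective (e2a.trans h))) hac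
  have e3b : σ₃ p₁ = b := by
    rw [hσ₃]; simp only [Equiv.trans_apply, e2b]
    exact Equiv.swap_apply_of_ne_of_ne
      (fun h => h12 (σ₂.injective (e2b.trans h))) hbc
  exact ⟨σ₃, e3a, e3b, e3c⟩

/-- The set of ordered triples of pairwise distinct elements. -/
def T3 (n : ℕ) : Finset (Fin n × Fin n × Fin n) :=
  univ.filter fun t => t.1 ≠ t.2.1 ∧ t.1 ≠ t.2.2 ∧ t.2.1 ≠ t.2.2

lemma card_T3 (n : ℕ) : (T3 n).card = n * ((n - 1) * (n - 2)) := by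
  classical
  rw [T3, card_filter]
  rw [Fintype.sum_prod_type]
  have inner2 : ∀ a b : Fin n,
      (∑ c : Fin n, if a ≠ b ∧ a ≠ c ∧ b ≠ c then 1 else 0) =
        if a ≠ b then n - 2 else 0 := by
    intro a b
    by_cases hab : a = b
    · simp [hab]
    · rw [if_pos hab]
      have h1 : (∑ c : Fin n, if a ≠ b ∧ a ≠ c ∧ b ≠ c then 1 else 0) =
          (univ.filter fun c : Fin n => a ≠ b ∧ a ≠ c ∧ b ≠ c).card := (card_filter _ _).symm
      rw [h1]
      have h2 : (univ.filter fun c : Fin n => a ≠ b ∧ a ≠ c ∧ b ≠ c) =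
          univ \ {a, b} := by
        ext x
        simp only [mem_filter, mem_univ, true_and, Finset.mem_sdiff, mem_insert, mem_singleton]
        constructor
        · rintro ⟨_, h₂, h₃⟩ h
          rcases h with h | h
          · exact h₂ h.symm
          · exact h₃ h.symm
        · intro h
          exact ⟨hab, fun h' => h (Or.inl h'.symm), fun h' => h (Or.inr h'.symm)⟩
      rw [h2, card_sdiff_of_subset (subset_univ _), card_univ, Fintype.card_fin]
      have : ({a, b} : Finset (Fin n)).card = 2 := card_pair hab
      omega
  have step : ∀ a : Fin n,
      (∑ b : Fin n, ∑ c : Fin n, if a ≠ b ∧ a ≠ c ∧ b ≠ c then 1 else 0) =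
        (n - 1) * (n - 2) := by
    intro a
    have : (∑ b : Fin n, ∑ c : Fin n, if a ≠ b ∧ a ≠ c ∧ b ≠ c then 1 else 0) =
        ∑ b : Fin n, if a ≠ b then n - 2 else 0 :=
      Finset.sum_congr rfl fun b _ => inner2 a b
    rw [this, ← Finset.sum_filter]
    have hf : (univ.filter fun b : Fin n => a ≠ b) = univ \ {a} := by
      ext x
      simp only [mem_filter, mem_univ, true_and, Finset.mem_sdiff, mem_singleton]
      exact ⟨fun h h' => h h'.symm, fun h h' => h h'.symm⟩
    rw [Finset.sum_const, hf, card_sdiff_of_subset (subset_univ _), card_univ, Fintype.card_fin,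
      card_singleton, smul_eq_mul]
  have step' : ∀ a : Fin n, (∑ y : Fin n × Fin n,
      if (a, y).1 ≠ (a, y).2.1 ∧ (a, y).1 ≠ (a, y).2.2 ∧ (a, y).2.1 ≠ (a, y).2.2
        then 1 else 0) = (n - 1) * (n - 2) := by
    intro a
    rw [Fintype.sum_prod_type]
    exact step a
  rw [Finset.sum_congr rfl fun a _ => step' a, Finset.sum_const, card_univ, Fintype.card_fin,
    smul_eq_mul]

lemma image_phi {n : ℕ} [NeZero n] {p₀ p₁ p₂ : Fin n} (h01 : p₀ ≠ p₁) (h02 : p₀ ≠ p₂)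
    (h12 : p₁ ≠ p₂) :
    (univ : Finset (Equiv.Perm (Fin n))).image (fun σ => (σ p₀, σ p₁, σ p₂)) = T3 n := by
  classical
  ext t
  simp only [mem_image, mem_univ, true_and, T3, mem_filter]
  constructor
  · rintro ⟨σ, rfl⟩
    exact ⟨σ.injective.ne h01, σ.injective.ne h02, σ.injective.ne h12⟩
  · rintro ⟨hab, hac, hbc⟩
    obtain ⟨σ, h1, h2, h3⟩ := exists_perm3 h01 h02 h12 hab hac hbc
    exact ⟨σ, by rw [h1, h2, h3]⟩

lemma fib_card {n : ℕ} [NeZero n] {p₀ p₁ p₂ : Fin n} {t t' : Fin n × Fin n × Fin n}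
    (ht : t ∈ T3 n) (ht' : t' ∈ T3 n) :
    (univ.filter fun σ : Equiv.Perm (Fin n) => (σ p₀, σ p₁, σ p₂) = t).card =
    (univ.filter fun σ : Equiv.Perm (Fin n) => (σ p₀, σ p₁, σ p₂) = t').card := by
  classical
  obtain ⟨a1, a2, a3⟩ := t
  obtain ⟨b1, b2, b3⟩ := t'
  rw [T3, mem_filter] at ht ht'
  obtain ⟨τ, hτ1, hτ2, hτ3⟩ := exists_perm3 (p₀ := a1) (p₁ := a2) (p₂ := a3)
    ht.2.1 ht.2.2.1 ht.2.2.2 ht'.2.1 ht'.2.2.1 ht'.2.2.2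
  refine Finset.card_nbij' (fun σ => σ.trans τ) (fun σ => σ.trans τ.symm) ?_ ?_ ?_ ?_
  · intro σ hσ
    rw [Finset.mem_coe, mem_filter] at hσ ⊢
    simp only [Prod.mk.injEq] at hσ ⊢
    obtain ⟨-, h1, h2, h3⟩ := hσ
    refine ⟨mem_univ _, ?_, ?_, ?_⟩ <;>
      simp only [Equiv.trans_apply, h1, h2, h3, hτ1, hτ2, hτ3]
  · intro σ hσ
    rw [Finset.mem_coe, mem_filter] at hσ ⊢
    simp only [Prod.mk.injEq] at hσ ⊢
    obtain ⟨-, h1, h2, h3⟩ := hσ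
    refine ⟨mem_univ _, ?_, ?_, ?_⟩ <;>
      simp only [Equiv.trans_apply, h1, h2, h3] <;>
      [exact (Equiv.symm_apply_eq τ).mpr hτ1.symm;
       exact (Equiv.symm_apply_eq τ).mpr hτ2.symm;
       exact (Equiv.symm_apply_eq τ).mpr hτ3.symm]
  · intro σ _; ext x; simp
  · intro σ _; ext x; simp

lemma master {n : ℕ} [NeZero n] {p₀ p₁ p₂ : Fin n} (h01 : p₀ ≠ p₁) (h02 : p₀ ≠ p₂)
    (h12 : p₁ ≠ p₂) (G : Fin n → Fin n → Fin n → ℝ) :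
    ((n * ((n - 1) * (n - 2)) : ℕ) : ℝ) *
        ∑ σ : Equiv.Perm (Fin n), G (σ p₀) (σ p₁) (σ p₂)
      = (Nat.factorial n : ℝ) * ∑ t ∈ T3 n, G t.1 t.2.1 t.2.2 := by
  classical
  have ht₀ : ((p₀, p₁, p₂) : Fin n × Fin n × Fin n) ∈ T3 n := by
    rw [T3, mem_filter]; exact ⟨mem_univ _, h01, h02, h12⟩
  set c : ℕ :=
    (univ.filter fun σ : Equiv.Perm (Fin n) => (σ p₀, σ p₁, σ p₂) = (p₀, p₁, p₂)).card with hc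
  have hfib : ∀ t ∈ T3 n,
      (univ.filter fun σ : Equiv.Perm (Fin n) => (σ p₀, σ p₁, σ p₂) = t).card = c :=
    fun t ht => fib_card ht ht₀
  have hsum : (∑ σ : Equiv.Perm (Fin n), G (σ p₀) (σ p₁) (σ p₂)) =
      (c : ℝ) * ∑ t ∈ T3 n, G t.1 t.2.1 t.2.2 := by
    have := Finset.sum_comp (s := (univ : Finset (Equiv.Perm (Fin n))))
      (fun t : Fin n × Fin n × Fin n => G t.1 t.2.1 t.2.2)
      (fun σ => (σ p₀, σ p₁, σ p₂))
    rw [image_phi h01 h02 h12] at this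
    rw [this]
    rw [Finset.mul_sum]
    refine Finset.sum_congr rfl fun t ht => ?_
    rw [hfib t ht, nsmul_eq_mul]
  have hcard : Nat.factorial n = (T3 n).card * c := by
    have hmap : ∀ σ ∈ (univ : Finset (Equiv.Perm (Fin n))),
        (σ p₀, σ p₁, σ p₂) ∈ T3 n := by
      intro σ _
      rw [T3, mem_filter]
      exact ⟨mem_univ _, σ.injective.ne h01, σ.injective.ne h02, σ.injective.ne h12⟩
    have := Finset.card_eq_sum_card_fiberwise hmap
    rw [card_univ, Fintype.card_perm, Fintype.card_fin] at this
    rw [this, Finset.sum_congr rfl hfib, Finset.sum_const, smul_eq_mul]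
  calc ((n * ((n - 1) * (n - 2)) : ℕ) : ℝ) * ∑ σ : Equiv.Perm (Fin n), G (σ p₀) (σ p₁) (σ p₂)
      = ((T3 n).card : ℝ) * ((c : ℝ) * ∑ t ∈ T3 n, G t.1 t.2.1 t.2.2) := by
        rw [hsum, ← card_T3]
    _ = (((T3 n).card * c : ℕ) : ℝ) * ∑ t ∈ T3 n, G t.1 t.2.1 t.2.2 := by
        push_cast; ring
    _ = (Nat.factorial n : ℝ) * ∑ t ∈ T3 n, G t.1 t.2.1 t.2.2 := by rw [← hcard]

open Fin.CommRing in
/-- Re-indexing the triple sum by the starting point and the two increments. -/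
lemma sum_T3_fg {n : ℕ} [NeZero n] (f g : Fin n → ℝ) :
    (∑ t ∈ T3 n, f (t.2.1 - t.1) * g (t.2.2 - t.2.1))
      = (n : ℝ) * ∑ d₁ : Fin n, ∑ d₂ : Fin n,
          if d₁ ≠ 0 ∧ d₂ ≠ 0 ∧ d₁ + d₂ ≠ 0 then f d₁ * g d₂ else 0 := by
  classical
  have h1 : (∑ t ∈ T3 n, f (t.2.1 - t.1) * g (t.2.2 - t.2.1))
      = ∑ t ∈ (univ.filter fun t : Fin n × Fin n × Fin n =>
          t.2.1 ≠ 0 ∧ t.2.2 ≠ 0 ∧ t.2.1 + t.2.2 ≠ 0), f t.2.1 * g t.2.2 := by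
    refine Finset.sum_nbij' (fun t => (t.1, t.2.1 - t.1, t.2.2 - t.2.1))
      (fun s => (s.1, s.1 + s.2.1, s.1 + s.2.1 + s.2.2)) ?_ ?_ ?_ ?_ ?_
    · intro t ht
      rw [T3, mem_filter] at ht
      obtain ⟨-, hab, hac, hbc⟩ := ht
      rw [mem_filter]
      refine ⟨mem_univ _, sub_ne_zero_of_ne hab.symm, sub_ne_zero_of_ne hbc.symm, ?_⟩
      have : t.2.1 - t.1 + (t.2.2 - t.2.1) = t.2.2 - t.1 := by ring
      rw [this]
      exact sub_ne_zero_of_ne hac.symm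
    · intro s hs
      rw [mem_filter] at hs
      obtain ⟨-, h₁, h₂, h₃⟩ := hs
      rw [T3, mem_filter]
      refine ⟨mem_univ _, ?_, ?_, ?_⟩
      · intro h; exact h₁ (by linear_combination (h : s.1 = s.1 + s.2.1).symm)
      · intro h; exact h₃ (by linear_combination (h : s.1 = s.1 + s.2.1 + s.2.2).symm)
      · intro h; exact h₂ (by linear_combination (h : s.1 + s.2.1 = s.1 + s.2.1 + s.2.2).symm)
    · intro t _
      obtain ⟨x, y, z⟩ := t
      simp only [Prod.mk.injEq]
      exact ⟨trivial, by ring, by ring⟩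
    · intro s _
      obtain ⟨x, y, z⟩ := s
      simp only [Prod.mk.injEq]
      exact ⟨trivial, by ring, by ring⟩
    · intro t _; rfl
  rw [h1]
  have h2 : (∑ t ∈ (univ.filter fun t : Fin n × Fin n × Fin n =>
        t.2.1 ≠ 0 ∧ t.2.2 ≠ 0 ∧ t.2.1 + t.2.2 ≠ 0), f t.2.1 * g t.2.2)
      = ∑ t : Fin n × Fin n × Fin n,
          if t.2.1 ≠ 0 ∧ t.2.2 ≠ 0 ∧ t.2.1 + t.2.2 ≠ 0 then f t.2.1 * g t.2.2 else 0 :=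
    Finset.sum_filter _ _
  rw [h2, Fintype.sum_prod_type]
  have h3 : ∀ a : Fin n, (∑ dd : Fin n × Fin n,
      if dd.1 ≠ 0 ∧ dd.2 ≠ 0 ∧ dd.1 + dd.2 ≠ 0 then f dd.1 * g dd.2 else 0)
      = ∑ d₁ : Fin n, ∑ d₂ : Fin n,
          if d₁ ≠ 0 ∧ d₂ ≠ 0 ∧ d₁ + d₂ ≠ 0 then f d₁ * g d₂ else 0 := by
    intro a; rw [Fintype.sum_prod_type]
  rw [Finset.sum_congr rfl fun a _ => h3 a, Finset.sum_const, card_univ, Fintype.card_fin,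
    nsmul_eq_mul]

lemma inner_sum {n : ℕ} [NeZero n] (v : Fin n → ℝ) {e : Fin n} (he : e ≠ 0) :
    (∑ d₂ : Fin n, if d₂ ≠ 0 ∧ e + d₂ ≠ 0 then v d₂ else 0)
      = (∑ d : Fin n, v d) - v 0 - v (-e) := by
  classical
  have h1 : (∑ d₂ : Fin n, if d₂ ≠ 0 ∧ e + d₂ ≠ 0 then v d₂ else 0)
      = ∑ d₂ ∈ univ \ ({0, -e} : Finset (Fin n)), v d₂ := by
    rw [← Finset.sum_filter]
    apply Finset.sum_congr _ fun _ _ => rfl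
    ext d₂
    simp only [mem_filter, mem_univ, true_and, Finset.mem_sdiff, mem_insert, mem_singleton, not_or]
    constructor
    · rintro ⟨h₁, h₂⟩
      exact ⟨h₁, fun h => h₂ (by rw [h]; exact add_neg_cancel e)⟩
    · rintro ⟨h₁, h₂⟩
      exact ⟨h₁, fun h => h₂ (eq_neg_of_add_eq_zero_right h)⟩
  have h0e : (0 : Fin n) ≠ -e := fun h => he (neg_eq_zero.mp h.symm)
  rw [h1, Finset.sum_sdiff_eq_sub (subset_univ _), Finset.sum_pair h0e]
  ring

lemma sum_ite_zero_fun {n : ℕ} [NeZero n] (S : ℝ) :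
    (∑ d : Fin n, if d = 0 then S else 0) = S := by
  classical
  rw [Finset.sum_ite_eq' univ (0 : Fin n) (fun _ => S)]
  simp

section Wvals
variable {n : ℕ} [NeZero n]

lemma W_ff :
    (∑ d₁ : Fin n, ∑ d₂ : Fin n,
        if d₁ ≠ 0 ∧ d₂ ≠ 0 ∧ d₁ + d₂ ≠ 0 then fZ n d₁ * fZ n d₂ else 0)
      = (∑ d : Fin n, fZ n d) ^ 2 - ∑ d : Fin n, (fZ n d) ^ 2 := by
  classical
  have key : ∀ d₁ : Fin n, (∑ d₂ : Fin n,
      if d₁ ≠ 0 ∧ d₂ ≠ 0 ∧ d₁ + d₂ ≠ 0 then fZ n d₁ * fZ n d₂ else 0)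
      = fZ n d₁ * (∑ d : Fin n, fZ n d) - (fZ n d₁) ^ 2 := by
    intro d₁
    by_cases hd : d₁ = 0
    · subst hd
      simp [fZ_zero]
    · have hterm : ∀ d₂ : Fin n,
          (if d₁ ≠ 0 ∧ d₂ ≠ 0 ∧ d₁ + d₂ ≠ 0 then fZ n d₁ * fZ n d₂ else 0)
            = fZ n d₁ * (if d₂ ≠ 0 ∧ d₁ + d₂ ≠ 0 then fZ n d₂ else 0) := by
        intro d₂
        by_cases h2 : d₂ ≠ 0 ∧ d₁ + d₂ ≠ 0
        · rw [if_pos ⟨hd, h2⟩, if_pos h2]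
        · rw [if_neg (fun h => h2 ⟨h.2.1, h.2.2⟩), if_neg h2, mul_zero]
      rw [Finset.sum_congr rfl fun d₂ _ => hterm d₂, ← Finset.mul_sum,
        inner_sum (fZ n) hd, fZ_zero, fZ_neg n hd]
      ring
  rw [Finset.sum_congr rfl fun d₁ _ => key d₁, Finset.sum_sub_distrib, ← Finset.sum_mul]
  ring

lemma W_f1 :
    (∑ d₁ : Fin n, ∑ d₂ : Fin n,
        if d₁ ≠ 0 ∧ d₂ ≠ 0 ∧ d₁ + d₂ ≠ 0 then fZ n d₁ * (1 : ℝ) else 0)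
      = ((n : ℝ) - 2) * ∑ d : Fin n, fZ n d := by
  classical
  have key : ∀ d₁ : Fin n, (∑ d₂ : Fin n,
      if d₁ ≠ 0 ∧ d₂ ≠ 0 ∧ d₁ + d₂ ≠ 0 then fZ n d₁ * (1 : ℝ) else 0)
      = fZ n d₁ * ((n : ℝ) - 2) := by
    intro d₁
    by_cases hd : d₁ = 0
    · subst hd
      simp [fZ_zero]
    · have hterm : ∀ d₂ : Fin n,
          (if d₁ ≠ 0 ∧ d₂ ≠ 0 ∧ d₁ + d₂ ≠ 0 then fZ n d₁ * (1 : ℝ) else 0)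
            = fZ n d₁ * (if d₂ ≠ 0 ∧ d₁ + d₂ ≠ 0 then (fun _ : Fin n => (1 : ℝ)) d₂ else 0) := by
        intro d₂
        by_cases h2 : d₂ ≠ 0 ∧ d₁ + d₂ ≠ 0
        · rw [if_pos ⟨hd, h2⟩, if_pos h2]
        · rw [if_neg (fun h => h2 ⟨h.2.1, h.2.2⟩), if_neg h2, mul_zero]
      rw [Finset.sum_congr rfl fun d₂ _ => hterm d₂, ← Finset.mul_sum,
        inner_sum (fun _ : Fin n => (1 : ℝ)) hd]
      have hone : (∑ _d : Fin n, (1 : ℝ)) = (n : ℝ) := by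
        rw [Finset.sum_const, card_univ, Fintype.card_fin, nsmul_eq_mul, mul_one]
      rw [hone]
      ring
  rw [Finset.sum_congr rfl fun d₁ _ => key d₁, ← Finset.sum_mul]
  ring

lemma W_1f :
    (∑ d₁ : Fin n, ∑ d₂ : Fin n,
        if d₁ ≠ 0 ∧ d₂ ≠ 0 ∧ d₁ + d₂ ≠ 0 then (1 : ℝ) * fZ n d₂ else 0)
      = ((n : ℝ) - 2) * ∑ d : Fin n, fZ n d := by
  classical
  have key : ∀ d₁ : Fin n, (∑ d₂ : Fin n,
      if d₁ ≠ 0 ∧ d₂ ≠ 0 ∧ d₁ + d₂ ≠ 0 then (1 : ℝ) * fZ n d₂ else 0)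
      = (∑ d : Fin n, fZ n d) - (if d₁ = 0 then ∑ d : Fin n, fZ n d else 0) - fZ n d₁ := by
    intro d₁
    by_cases hd : d₁ = 0
    · subst hd
      simp [fZ_zero]
    · have hterm : ∀ d₂ : Fin n,
          (if d₁ ≠ 0 ∧ d₂ ≠ 0 ∧ d₁ + d₂ ≠ 0 then (1 : ℝ) * fZ n d₂ else 0)
            = (if d₂ ≠ 0 ∧ d₁ + d₂ ≠ 0 then fZ n d₂ else 0) := by
        intro d₂
        by_cases h2 : d₂ ≠ 0 ∧ d₁ + d₂ ≠ 0
        · rw [if_pos ⟨hd, h2⟩, if_pos h2, one_mul]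
        · rw [if_neg (fun h => h2 ⟨h.2.1, h.2.2⟩), if_neg h2]
      rw [Finset.sum_congr rfl fun d₂ _ => hterm d₂, inner_sum (fZ n) hd, fZ_zero,
        fZ_neg n hd, if_neg hd]
  rw [Finset.sum_congr rfl fun d₁ _ => key d₁]
  rw [Finset.sum_sub_distrib, Finset.sum_sub_distrib, Finset.sum_const, card_univ,
    Fintype.card_fin, sum_ite_zero_fun]
  ring

end Wvals

/-! Power sums over `range n`. -/

lemma p1 (m : ℕ) : (∑ i ∈ Finset.range m, (i : ℝ)) = m * (m - 1) / 2 := by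
  induction m with
  | zero => simp
  | succ m ih => rw [Finset.sum_range_succ, ih]; push_cast; ring

lemma p2 (m : ℕ) : (∑ i ∈ Finset.range m, (i : ℝ) ^ 2) = m * (m - 1) * (2 * m - 1) / 6 := by
  induction m with
  | zero => simp
  | succ m ih => rw [Finset.sum_range_succ, ih]; push_cast; ring

lemma p3 (m : ℕ) : (∑ i ∈ Finset.range m, (i : ℝ) ^ 3) = (m * (m - 1)) ^ 2 / 4 := by
  induction m with
  | zero => simp
  | succ m ih => rw [Finset.sum_range_succ, ih]; push_cast; ring

lemma p4 (m : ℕ) : (∑ i ∈ Finset.range m, (i : ℝ) ^ 4)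
    = m * (m - 1) * (2 * m - 1) * (3 * m ^ 2 - 3 * m - 1) / 30 := by
  induction m with
  | zero => simp
  | succ m ih => rw [Finset.sum_range_succ, ih]; push_cast; ring

lemma sum_fZ (n : ℕ) [NeZero n] :
    (∑ d : Fin n, fZ n d) = (n : ℝ) * ((n : ℝ) ^ 2 - 1) / 6 := by
  have h : (∑ d : Fin n, fZ n d) = ∑ i ∈ Finset.range n, (i : ℝ) * ((n : ℝ) - (i : ℝ)) :=
    Fin.sum_univ_eq_sum_range (fun i => (i : ℝ) * ((n : ℝ) - (i : ℝ))) n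
  rw [h]
  have h2 : ∀ i ∈ Finset.range n, (i : ℝ) * ((n : ℝ) - (i : ℝ))
      = (n : ℝ) * (i : ℝ) - (i : ℝ) ^ 2 := fun i _ => by ring
  rw [Finset.sum_congr rfl h2, Finset.sum_sub_distrib, ← Finset.mul_sum, p1, p2]
  ring

lemma sum_fZ_sq (n : ℕ) [NeZero n] :
    (∑ d : Fin n, (fZ n d) ^ 2) = (n : ℝ) * ((n : ℝ) ^ 4 - 1) / 30 := by
  have h : (∑ d : Fin n, (fZ n d) ^ 2)
      = ∑ i ∈ Finset.range n, ((i : ℝ) * ((n : ℝ) - (i : ℝ))) ^ 2 :=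
    Fin.sum_univ_eq_sum_range (fun i => ((i : ℝ) * ((n : ℝ) - (i : ℝ))) ^ 2) n
  rw [h]
  have h2 : ∀ i ∈ Finset.range n, ((i : ℝ) * ((n : ℝ) - (i : ℝ))) ^ 2
      = (n : ℝ) ^ 2 * (i : ℝ) ^ 2 - 2 * (n : ℝ) * (i : ℝ) ^ 3 + (i : ℝ) ^ 4 :=
    fun i _ => by ring
  rw [Finset.sum_congr rfl h2]
  rw [Finset.sum_add_distrib, Finset.sum_sub_distrib, ← Finset.mul_sum, ← Finset.mul_sum,
    p2, p3, p4]
  ring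

open Fin.CommRing in
lemma main {n : ℕ} [NeZero n] (hn : 4 ≤ n) (j : Fin n) :
    permE n (fun σ => cycZ n σ j * cycZ n σ (j + 1))
      - permE n (fun σ => cycZ n σ j) * permE n (fun σ => cycZ n σ (j + 1))
      = -((n : ℝ) * ((n : ℝ) - 3) * ((n : ℝ) + 1)) / 180 := by
  classical
  have h2n : ((2 : Fin n) : ℕ) = 2 := by
    have : ((2 : ℕ) : Fin n) = (2 : Fin n) := by norm_cast
    rw [← this, Fin.val_cast_of_lt (by omega)]
  have h1n : ((1 : Fin n) : ℕ) = 1 := by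
    have : ((1 : ℕ) : Fin n) = (1 : Fin n) := by norm_cast
    rw [← this, Fin.val_cast_of_lt (by omega)]
  have hone : (1 : Fin n) ≠ 0 := by
    intro h
    have := congrArg Fin.val h
    rw [h1n] at this
    simp at this
  have htwo : (2 : Fin n) ≠ 0 := by
    intro h
    have := congrArg Fin.val h
    rw [h2n] at this
    simp at this
  have h01 : j ≠ j + 1 := by
    intro h
    exact hone (by linear_combination -h)
  have h02 : j ≠ j + 1 + 1 := by
    intro h
    have : (2 : Fin n) = 0 := by linear_combination -h
    exact htwo this
  have h12 : j + 1 ≠ j + 1 + 1 := by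
    intro h
    exact hone (by linear_combination -h)
  -- key sums
  have hZj : ∀ σ : Equiv.Perm (Fin n), cycZ n σ j = fZ n (σ (j + 1) - σ j) := fun σ => rfl
  have hZk : ∀ σ : Equiv.Perm (Fin n),
      cycZ n σ (j + 1) = fZ n (σ (j + 1 + 1) - σ (j + 1)) := fun σ => rfl
  set S : ℝ := ∑ d : Fin n, fZ n d with hS
  set Q : ℝ := ∑ d : Fin n, (fZ n d) ^ 2 with hQ
  have hc3 : ((n * ((n - 1) * (n - 2)) : ℕ) : ℝ)
      = (n : ℝ) * (((n : ℝ) - 1) * ((n : ℝ) - 2)) := by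
    have e1 : ((n - 1 : ℕ) : ℝ) = (n : ℝ) - 1 := by
      push_cast [Nat.cast_sub (by omega : 1 ≤ n)]; ring
    have e2 : ((n - 2 : ℕ) : ℝ) = (n : ℝ) - 2 := by
      push_cast [Nat.cast_sub (by omega : 2 ≤ n)]; ring
    push_cast [e1, e2]
    ring
  set c3 : ℝ := (n : ℝ) * (((n : ℝ) - 1) * ((n : ℝ) - 2)) with hc3def
  have hc3ne : c3 ≠ 0 := by
    rw [hc3def]
    have h0 : (n : ℝ) ≠ 0 := by positivity
    have hn4 : (4 : ℝ) ≤ (n : ℝ) := by exact_mod_cast hn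
    have h1 : (n : ℝ) - 1 ≠ 0 := by intro h; nlinarith
    have h2 : (n : ℝ) - 2 ≠ 0 := by intro h; nlinarith
    exact mul_ne_zero h0 (mul_ne_zero h1 h2)
  have hfacne : (Nat.factorial n : ℝ) ≠ 0 := by
    exact_mod_cast Nat.factorial_ne_zero n
  -- E[Z_j Z_k]
  have H3 := master h01 h02 h12 (fun a b c => fZ n (b - a) * fZ n (c - b))
  rw [sum_T3_fg (fZ n) (fZ n), W_ff, hc3] at H3
  -- E[Z_j]
  have H1 := master h01 h02 h12 (fun a b c => fZ n (b - a) * (1 : ℝ))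
  rw [sum_T3_fg (fZ n) (fun _ => (1 : ℝ)), W_f1, hc3] at H1
  -- E[Z_k]
  have H2 := master h01 h02 h12 (fun a b c => (1 : ℝ) * fZ n (c - b))
  rw [sum_T3_fg (fun _ => (1 : ℝ)) (fZ n), W_1f, hc3] at H2
  -- identify the sums with the cycZ sums
  have hs3 : (∑ σ : Equiv.Perm (Fin n), cycZ n σ j * cycZ n σ (j + 1))
      = ∑ σ : Equiv.Perm (Fin n), fZ n (σ (j + 1) - σ j) * fZ n (σ (j + 1 + 1) - σ (j + 1)) :=
    Finset.sum_congr rfl fun σ _ => by rw [hZj σ, hZk σ]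
  have hs1 : (∑ σ : Equiv.Perm (Fin n), cycZ n σ j)
      = ∑ σ : Equiv.Perm (Fin n), fZ n (σ (j + 1) - σ j) * (1 : ℝ) :=
    Finset.sum_congr rfl fun σ _ => by rw [hZj σ, mul_one]
  have hs2 : (∑ σ : Equiv.Perm (Fin n), cycZ n σ (j + 1))
      = ∑ σ : Equiv.Perm (Fin n), (1 : ℝ) * fZ n (σ (j + 1 + 1) - σ (j + 1)) :=
    Finset.sum_congr rfl fun σ _ => by rw [hZk σ, one_mul]
  rw [permE, permE, permE, hs3, hs1, hs2]
  have e3 : (∑ σ : Equiv.Perm (Fin n),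
      fZ n (σ (j + 1) - σ j) * fZ n (σ (j + 1 + 1) - σ (j + 1)))
      = (Nat.factorial n : ℝ) * ((n : ℝ) * (S ^ 2 - Q)) / c3 := by
    rw [eq_div_iff hc3ne]
    linear_combination H3
  have e1 : (∑ σ : Equiv.Perm (Fin n), fZ n (σ (j + 1) - σ j) * (1 : ℝ))
      = (Nat.factorial n : ℝ) * ((n : ℝ) * (((n : ℝ) - 2) * S)) / c3 := by
    rw [eq_div_iff hc3ne]
    linear_combination H1
  have e2 : (∑ σ : Equiv.Perm (Fin n), (1 : ℝ) * fZ n (σ (j + 1 + 1) - σ (j + 1)))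
      = (Nat.factorial n : ℝ) * ((n : ℝ) * (((n : ℝ) - 2) * S)) / c3 := by
    rw [eq_div_iff hc3ne]
    linear_combination H2
  rw [e3, e1, e2]
  have hSval : S = (n : ℝ) * ((n : ℝ) ^ 2 - 1) / 6 := by rw [hS]; exact sum_fZ n
  have hQval : Q = (n : ℝ) * ((n : ℝ) ^ 4 - 1) / 30 := by rw [hQ]; exact sum_fZ_sq n
  rw [hSval, hQval, hc3def]
  have h0 : (n : ℝ) ≠ 0 := by positivity
  have hn4 : (4 : ℝ) ≤ (n : ℝ) := by exact_mod_cast hn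
  have hm1 : (n : ℝ) - 1 ≠ 0 := by intro h; nlinarith
  have hm2 : (n : ℝ) - 2 ≠ 0 := by intro h; nlinarith
  field_simp
  ring

end Stmt11Aux

/-- for a uniformly random cyclic listing of `{0,...,n-1}`, the covariance
of the weights `Z_j, Z_k` of two adjacent distinct cyclic edges equals `-n(n-3)(n+1)/180`. -/
theorem stmt11 (n : ℕ) [NeZero n] (hn : 4 ≤ n) (j k : Fin n) (hjk : j ≠ k)
    (hadj : k = j + 1 ∨ j = k + 1) :
    permE n (fun σ => cycZ n σ j * cycZ n σ k)
      - permE n (fun σ => cycZ n σ j) * permE n (fun σ => cycZ n σ k)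
      = -((n : ℝ) * ((n : ℝ) - 3) * ((n : ℝ) + 1)) / 180 := by
  rcases hadj with h | h
  · subst h
    exact Stmt11Aux.main hn j
  · subst h
    have hmain := Stmt11Aux.main hn k
    have hfun : (fun σ : Equiv.Perm (Fin n) => cycZ n σ (k + 1) * cycZ n σ k)
        = fun σ => cycZ n σ k * cycZ n σ (k + 1) := funext fun σ => mul_comm _ _
    rw [hfun, mul_comm (permE n fun σ => cycZ n σ (k + 1))]
    exact hmain
end

section
/- In the same setup, for two disjoint distinct cyclic edges (sharing no vertex), Cov(Z_j, Z_k) = n(n+1)/90, using E[Z_jZ_k] = ((n-4)A_n² + 2B_n)/((n-1)(n-2)(n-3)). -/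
open Filter

namespace Stmt12Aux

open Finset Function

/-! ### Gauss-type power sums -/

lemma gsum1 (n : ℕ) : ∑ i ∈ range n, (i:ℝ) = n*(n-1)/2 := by
  induction n with
  | zero => simp
  | succ m ih => rw [sum_range_succ, ih]; push_cast; ring

lemma gsum2 (n : ℕ) : ∑ i ∈ range n, (i:ℝ)^2 = n*(n-1)*(2*n-1)/6 := by
  induction n with
  | zero => simp
  | succ m ih => rw [sum_range_succ, ih]; push_cast; ring

lemma gsum3 (n : ℕ) : ∑ i ∈ range n, (i:ℝ)^3 = (n*(n-1)/2)^2 := by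
  induction n with
  | zero => simp
  | succ m ih => rw [sum_range_succ, ih]; push_cast; ring

lemma gsum4 (n : ℕ) : ∑ i ∈ range n, (i:ℝ)^4 = n*(n-1)*(2*n-1)*(3*n^2-3*n-1)/30 := by
  induction n with
  | zero => simp
  | succ m ih => rw [sum_range_succ, ih]; push_cast; ring

/-! ### The weight function -/

noncomputable def zf (n : ℕ) [NeZero n] (x y : Fin n) : ℝ :=
  (((y - x : Fin n) : ℕ) : ℝ) * ((n : ℝ) - (((y - x : Fin n) : ℕ) : ℝ))

variable {n : ℕ} [NeZero n]

lemma zf_diag (x : Fin n) : zf n x x = 0 := by simp [zf]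

lemma zf_symm (x y : Fin n) : zf n x y = zf n y x := by
  rcases eq_or_ne x y with rfl | hxy
  · rfl
  · have h1 : (y - x : Fin n) ≠ 0 := sub_ne_zero.mpr (Ne.symm hxy)
    have h2 : x - y = -(y - x) := (neg_sub y x).symm
    have hd : ((y - x : Fin n) : ℕ) < n := (y - x).isLt
    have hd0 : 0 < ((y - x : Fin n) : ℕ) := Nat.pos_of_ne_zero (fun h => h1 (Fin.ext (by rw [h]; simp)))
    have hneg : ((-(y - x) : Fin n) : ℕ) = n - ((y - x : Fin n) : ℕ) := by
      rw [Fin.coe_neg, Nat.mod_eq_of_lt (by omega)]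
    rw [zf, zf, h2, hneg]
    have : ((n - ((y - x : Fin n) : ℕ) : ℕ) : ℝ) = (n:ℝ) - ((y - x : Fin n) : ℕ) := by
      push_cast [hd.le]; ring
    rw [this]; ring

lemma zf_shift (x : Fin n) (F : ℝ → ℝ) :
    ∑ y : Fin n, F (zf n x y) = ∑ i ∈ range n, F ((i:ℝ)*((n:ℝ)-i)) := by
  rw [← Fin.sum_univ_eq_sum_range]
  refine (Fintype.sum_equiv (Equiv.addLeft x) _ _ ?_).symm
  intro c
  have : (x + c - x : Fin n) = c := add_sub_cancel_left x c
  simp [zf, Equiv.addLeft, this]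

lemma zf_rowA (x : Fin n) : ∑ y : Fin n, zf n x y = (n:ℝ)*((n:ℝ)^2-1)/6 := by
  rw [show (fun y => zf n x y) = (fun y => id (zf n x y)) from rfl, zf_shift x id]
  simp only [id]
  have h : ∀ i ∈ range n, (i:ℝ)*((n:ℝ)-i) = (n:ℝ)*(i:ℝ) - (i:ℝ)^2 := by intros; ring
  rw [sum_congr rfl h, sum_sub_distrib, ← mul_sum, gsum1, gsum2]; ring

lemma zf_rowB (x : Fin n) : ∑ y : Fin n, (zf n x y)^2 = (n:ℝ)*((n:ℝ)^4-1)/30 := by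
  rw [show (fun y => (zf n x y)^2) = (fun y => (fun t => t^2) (zf n x y)) from rfl,
    zf_shift x (fun t => t^2)]
  have h : ∀ i ∈ range n, ((i:ℝ)*((n:ℝ)-i))^2
      = (n:ℝ)^2*(i:ℝ)^2 - 2*(n:ℝ)*(i:ℝ)^3 + (i:ℝ)^4 := by intros; ring
  rw [sum_congr rfl h]
  simp only [sum_add_distrib, sum_sub_distrib, ← mul_sum, gsum2, gsum3, gsum4]
  ring

lemma zf_colA (y : Fin n) : ∑ x : Fin n, zf n x y = (n:ℝ)*((n:ℝ)^2-1)/6 := by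
  simp only [fun x => zf_symm x y]
  exact zf_rowA y

/-! ### Counting lemma: averaging over the symmetric group -/

lemma exists_perm_map {α : Type*} [DecidableEq α] :
    ∀ {m : ℕ} (f g : Fin m → α), Injective f → Injective g →
    ∃ τ : Equiv.Perm α, ∀ i, τ (f i) = g i := by
  intro m
  induction m with
  | zero => exact fun f g _ _ => ⟨1, fun i => i.elim0⟩
  | succ m ih =>
    intro f g hf hg
    obtain ⟨τ, hτ⟩ := ih (f ∘ Fin.castSucc) (g ∘ Fin.castSucc)
      (hf.comp (Fin.castSucc_injective m)) (hg.comp (Fin.castSucc_injective m))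
    simp only [Function.comp] at hτ
    refine ⟨Equiv.swap (τ (f (Fin.last m))) (g (Fin.last m)) * τ, fun i => ?_⟩
    induction i using Fin.lastCases with
    | last => simp
    | cast j =>
      have h1 : τ (f (Fin.castSucc j)) ≠ τ (f (Fin.last m)) :=
        fun h => (Fin.castSucc_lt_last j).ne (hf (τ.injective h))
      have h2 : τ (f (Fin.castSucc j)) ≠ g (Fin.last m) := by
        rw [hτ j]
        exact fun h => (Fin.castSucc_lt_last j).ne (hg h)
      simp only [Equiv.Perm.mul_apply, Equiv.swap_apply_of_ne_of_ne h1 h2]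
      exact hτ j

lemma count_inj (n m : ℕ) :
    (∑ v : Fin m → Fin n, if Injective v then (1:ℝ) else 0)
      = (Nat.descFactorial n m : ℝ) := by
  classical
  rw [Finset.sum_boole]
  norm_cast
  rw [← Fintype.card_subtype]
  rw [Fintype.card_congr (Equiv.subtypeInjectiveEquivEmbedding (Fin m) (Fin n))]
  simp [Fintype.card_embedding_eq]

lemma key_count {n m : ℕ} (F : (Fin m → Fin n) → ℝ) (u : Fin m → Fin n)
    (hu : Injective u) :
    (Nat.descFactorial n m : ℝ) * ∑ σ : Equiv.Perm (Fin n), F (σ ∘ u)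
      = (Nat.factorial n : ℝ) * ∑ v : Fin m → Fin n, if Injective v then F v else 0 := by
  classical
  have transit : ∀ v : Fin m → Fin n, Injective v →
      (∑ σ : Equiv.Perm (Fin n), F (σ ∘ u)) = ∑ σ : Equiv.Perm (Fin n), F (σ ∘ v) := by
    intro v hv
    obtain ⟨τ, hτ⟩ := exists_perm_map u v hu hv
    refine Fintype.sum_equiv (Equiv.mulRight τ⁻¹) _ _ fun σ => ?_
    congr 1
    funext i
    simp [← hτ i]
  calc (Nat.descFactorial n m : ℝ) * ∑ σ : Equiv.Perm (Fin n), F (σ ∘ u)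
      = (∑ v : Fin m → Fin n, if Injective v then (1:ℝ) else 0)
          * ∑ σ : Equiv.Perm (Fin n), F (σ ∘ u) := by rw [count_inj]
    _ = ∑ v : Fin m → Fin n, if Injective v
          then ∑ σ : Equiv.Perm (Fin n), F (σ ∘ v) else 0 := by
        rw [Finset.sum_mul]
        refine Finset.sum_congr rfl fun v _ => ?_
        by_cases hv : Injective v
        · rw [if_pos hv, if_pos hv, one_mul, transit v hv]
        · rw [if_neg hv, if_neg hv, zero_mul]
    _ = ∑ σ : Equiv.Perm (Fin n), ∑ v : Fin m → Fin n,
          if Injective v then F (σ ∘ v) else 0 := by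
        rw [Finset.sum_comm]
        refine Finset.sum_congr rfl fun v _ => ?_
        by_cases hv : Injective v <;> simp [hv]
    _ = ∑ σ : Equiv.Perm (Fin n), ∑ v : Fin m → Fin n,
          if Injective v then F v else 0 := by
        refine Finset.sum_congr rfl fun σ _ => ?_
        refine Fintype.sum_equiv (Equiv.arrowCongr (Equiv.refl (Fin m)) σ) _ _ fun v => ?_
        have hiff : Injective (⇑σ ∘ v) ↔ Injective v := Injective.of_comp_iff σ.injective v
        have harr : (Equiv.arrowCongr (Equiv.refl (Fin m)) σ) v = ⇑σ ∘ v := by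
          funext i; simp [Equiv.arrowCongr]
        rw [harr]
        by_cases hv : Injective v
        · rw [if_pos hv, if_pos (hiff.mpr hv)]
        · rw [if_neg hv, if_neg (fun h => hv (hiff.mp h))]
    _ = (Nat.factorial n : ℝ) * ∑ v : Fin m → Fin n, if Injective v then F v else 0 := by
        rw [Finset.sum_const, card_univ, Fintype.card_perm, Fintype.card_fin,
          nsmul_eq_mul]

/-! ### Injectivity on small tuples and sum conversion -/

lemma inj2 {α : Type*} (v : Fin 2 → α) : Injective v ↔ v 0 ≠ v 1 := by
  constructor
  · intro h he
    have := h he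
    simp at this
  · intro h i j hij
    fin_cases i <;> fin_cases j <;> simp_all

lemma inj4 {α : Type*} (v : Fin 4 → α) :
    Injective v ↔ v 0 ≠ v 1 ∧ v 0 ≠ v 2 ∧ v 0 ≠ v 3 ∧ v 1 ≠ v 2 ∧ v 1 ≠ v 3 ∧ v 2 ≠ v 3 := by
  constructor
  · intro h
    refine ⟨fun he => ?_, fun he => ?_, fun he => ?_, fun he => ?_, fun he => ?_, fun he => ?_⟩
      <;> · have := h he; simp at this
  · rintro ⟨h1, h2, h3, h4, h5, h6⟩ i j hij
    fin_cases i <;> fin_cases j <;> simp_all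

def eq2 {α : Type*} : (Fin 2 → α) ≃ α × α where
  toFun v := (v 0, v 1)
  invFun p := ![p.1, p.2]
  left_inv v := by funext i; fin_cases i <;> rfl
  right_inv p := rfl

def eq4 {α : Type*} : (Fin 4 → α) ≃ α × α × α × α where
  toFun v := (v 0, v 1, v 2, v 3)
  invFun p := ![p.1, p.2.1, p.2.2.1, p.2.2.2]
  left_inv v := by funext i; fin_cases i <;> rfl
  right_inv p := rfl

lemma sum2_conv {α : Type*} [Fintype α] [DecidableEq α] (G : α → α → ℝ) :
    (∑ v : Fin 2 → α, if Injective v then G (v 0) (v 1) else 0)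
      = ∑ x : α, ∑ y : α, if x ≠ y then G x y else 0 := by
  classical
  have h1 : (∑ v : Fin 2 → α, if Injective v then G (v 0) (v 1) else 0)
      = ∑ p : α × α, if p.1 ≠ p.2 then G p.1 p.2 else 0 := by
    refine Fintype.sum_equiv eq2 _ _ fun v => ?_
    show (if Injective v then G (v 0) (v 1) else 0) = if v 0 ≠ v 1 then G (v 0) (v 1) else 0
    by_cases h : Injective v
    · rw [if_pos h, if_pos ((inj2 v).mp h)]
    · rw [if_neg h, if_neg (fun hc => h ((inj2 v).mpr hc))]
  rw [h1]
  simp only [Fintype.sum_prod_type]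

lemma sum4_conv {α : Type*} [Fintype α] [DecidableEq α] (G : α → α → α → α → ℝ) :
    (∑ v : Fin 4 → α, if Injective v then G (v 0) (v 1) (v 2) (v 3) else 0)
      = ∑ a : α, ∑ b : α, ∑ c : α, ∑ d : α,
          if a ≠ b ∧ a ≠ c ∧ a ≠ d ∧ b ≠ c ∧ b ≠ d ∧ c ≠ d then G a b c d else 0 := by
  classical
  have h1 : (∑ v : Fin 4 → α, if Injective v then G (v 0) (v 1) (v 2) (v 3) else 0)
      = ∑ p : α × α × α × α,
          if p.1 ≠ p.2.1 ∧ p.1 ≠ p.2.2.1 ∧ p.1 ≠ p.2.2.2 ∧ p.2.1 ≠ p.2.2.1 ∧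
             p.2.1 ≠ p.2.2.2 ∧ p.2.2.1 ≠ p.2.2.2
          then G p.1 p.2.1 p.2.2.1 p.2.2.2 else 0 := by
    refine Fintype.sum_equiv eq4 _ _ fun v => ?_
    show (if Injective v then G (v 0) (v 1) (v 2) (v 3) else 0) = if v 0 ≠ v 1 ∧ v 0 ≠ v 2 ∧ v 0 ≠ v 3 ∧ v 1 ≠ v 2 ∧
      v 1 ≠ v 3 ∧ v 2 ≠ v 3 then G (v 0) (v 1) (v 2) (v 3) else 0
    by_cases h : Injective v
    · rw [if_pos h, if_pos ((inj4 v).mp h)]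
    · rw [if_neg h, if_neg (fun hc => h ((inj4 v).mpr hc))]
  rw [h1]
  simp only [Fintype.sum_prod_type]

/-! ### Evaluation of the sums -/

lemma sum_ite_const {ι : Type*} [Fintype ι] (P : Prop) [Decidable P] (f : ι → ℝ) :
    (∑ i : ι, if P then f i else 0) = if P then ∑ i, f i else 0 := by
  split <;> simp

lemma sumall : ∑ a : Fin n, ∑ b : Fin n, zf n a b = (n:ℝ) * ((n:ℝ)*((n:ℝ)^2-1)/6) := by
  rw [Finset.sum_congr rfl (fun a _ => zf_rowA a), Finset.sum_const, Finset.card_univ,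
    Fintype.card_fin, nsmul_eq_mul]

lemma sumallsq : ∑ a : Fin n, ∑ b : Fin n, (zf n a b)^2
    = (n:ℝ) * ((n:ℝ)*((n:ℝ)^4-1)/30) := by
  rw [Finset.sum_congr rfl (fun a _ => zf_rowB a), Finset.sum_const, Finset.card_univ,
    Fintype.card_fin, nsmul_eq_mul]

lemma pointwise (a b c d : Fin n) :
    (if a ≠ b ∧ a ≠ c ∧ a ≠ d ∧ b ≠ c ∧ b ≠ d ∧ c ≠ d then zf n a b * zf n c d else 0)
    = zf n a b * zf n c d
      - (if c = a then zf n a b * zf n c d else 0)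
      - (if c = b then zf n a b * zf n c d else 0)
      - (if d = a then zf n a b * zf n c d else 0)
      - (if d = b then zf n a b * zf n c d else 0)
      + (if c = a ∧ d = b then zf n a b * zf n c d else 0)
      + (if c = b ∧ d = a then zf n a b * zf n c d else 0) := by
  by_cases hab : a = b
  · subst hab; simp [zf_diag]
  by_cases hcd : c = d
  · subst hcd; simp [zf_diag, hab]
  by_cases hca : c = a <;> by_cases hcb : c = b <;> by_cases hda : d = a <;>
    by_cases hdb : d = b <;> simp_all [eq_comm, Ne]

lemma T0 : ∑ a : Fin n, ∑ b : Fin n, ∑ c : Fin n, ∑ d : Fin n, zf n a b * zf n c d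
    = ((n:ℝ) * ((n:ℝ)*((n:ℝ)^2-1)/6))^2 := by
  simp only [← Finset.mul_sum]
  simp only [← Finset.sum_mul]
  rw [sumall]; ring

lemma T1 : ∑ a : Fin n, ∑ b : Fin n, ∑ c : Fin n, ∑ d : Fin n,
    (if c = a then zf n a b * zf n c d else 0)
    = (n:ℝ) * ((n:ℝ)*((n:ℝ)^2-1)/6)^2 := by
  have step : ∀ a b : Fin n, (∑ c : Fin n, ∑ d : Fin n,
      if c = a then zf n a b * zf n c d else 0) = zf n a b * ((n:ℝ)*((n:ℝ)^2-1)/6) := by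
    intro a b
    rw [Finset.sum_congr rfl (fun c _ => sum_ite_const (c = a) _), Finset.sum_ite_eq']
    simp [← Finset.mul_sum, zf_rowA]
  rw [Finset.sum_congr rfl (fun a _ => Finset.sum_congr rfl (fun b _ => step a b))]
  simp only [← Finset.sum_mul]
  rw [sumall]; ring

lemma T2 : ∑ a : Fin n, ∑ b : Fin n, ∑ c : Fin n, ∑ d : Fin n,
    (if c = b then zf n a b * zf n c d else 0)
    = (n:ℝ) * ((n:ℝ)*((n:ℝ)^2-1)/6)^2 := by
  have step : ∀ a b : Fin n, (∑ c : Fin n, ∑ d : Fin n,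
      if c = b then zf n a b * zf n c d else 0) = zf n a b * ((n:ℝ)*((n:ℝ)^2-1)/6) := by
    intro a b
    rw [Finset.sum_congr rfl (fun c _ => sum_ite_const (c = b) _), Finset.sum_ite_eq']
    simp [← Finset.mul_sum, zf_rowA]
  rw [Finset.sum_congr rfl (fun a _ => Finset.sum_congr rfl (fun b _ => step a b))]
  simp only [← Finset.sum_mul]
  rw [sumall]; ring

lemma T3 : ∑ a : Fin n, ∑ b : Fin n, ∑ c : Fin n, ∑ d : Fin n,
    (if d = a then zf n a b * zf n c d else 0)
    = (n:ℝ) * ((n:ℝ)*((n:ℝ)^2-1)/6)^2 := by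
  have step : ∀ a b : Fin n, (∑ c : Fin n, ∑ d : Fin n,
      if d = a then zf n a b * zf n c d else 0) = zf n a b * ((n:ℝ)*((n:ℝ)^2-1)/6) := by
    intro a b
    rw [Finset.sum_congr rfl (fun c _ => Finset.sum_ite_eq' univ a _)]
    simp [← Finset.mul_sum, zf_colA]
  rw [Finset.sum_congr rfl (fun a _ => Finset.sum_congr rfl (fun b _ => step a b))]
  simp only [← Finset.sum_mul]
  rw [sumall]; ring

lemma T4 : ∑ a : Fin n, ∑ b : Fin n, ∑ c : Fin n, ∑ d : Fin n,
    (if d = b then zf n a b * zf n c d else 0)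
    = (n:ℝ) * ((n:ℝ)*((n:ℝ)^2-1)/6)^2 := by
  have step : ∀ a b : Fin n, (∑ c : Fin n, ∑ d : Fin n,
      if d = b then zf n a b * zf n c d else 0) = zf n a b * ((n:ℝ)*((n:ℝ)^2-1)/6) := by
    intro a b
    rw [Finset.sum_congr rfl (fun c _ => Finset.sum_ite_eq' univ b _)]
    simp [← Finset.mul_sum, zf_colA]
  rw [Finset.sum_congr rfl (fun a _ => Finset.sum_congr rfl (fun b _ => step a b))]
  simp only [← Finset.sum_mul]
  rw [sumall]; ring

lemma T5 : ∑ a : Fin n, ∑ b : Fin n, ∑ c : Fin n, ∑ d : Fin n,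
    (if c = a ∧ d = b then zf n a b * zf n c d else 0)
    = (n:ℝ) * ((n:ℝ)*((n:ℝ)^4-1)/30) := by
  have step : ∀ a b : Fin n, (∑ c : Fin n, ∑ d : Fin n,
      if c = a ∧ d = b then zf n a b * zf n c d else 0) = (zf n a b)^2 := by
    intro a b
    simp only [ite_and]
    rw [Finset.sum_congr rfl (fun c _ => sum_ite_const (c = a) _), Finset.sum_ite_eq']
    simp only [mem_univ, if_true]
    rw [Finset.sum_ite_eq' univ b]
    simp [sq]
  rw [Finset.sum_congr rfl (fun a _ => Finset.sum_congr rfl (fun b _ => step a b))]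
  exact sumallsq

lemma T6 : ∑ a : Fin n, ∑ b : Fin n, ∑ c : Fin n, ∑ d : Fin n,
    (if c = b ∧ d = a then zf n a b * zf n c d else 0)
    = (n:ℝ) * ((n:ℝ)*((n:ℝ)^4-1)/30) := by
  have step : ∀ a b : Fin n, (∑ c : Fin n, ∑ d : Fin n,
      if c = b ∧ d = a then zf n a b * zf n c d else 0) = (zf n a b)^2 := by
    intro a b
    simp only [ite_and]
    rw [Finset.sum_congr rfl (fun c _ => sum_ite_const (c = b) _), Finset.sum_ite_eq']
    simp only [mem_univ, if_true]
    rw [Finset.sum_ite_eq' univ a]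
    simp [sq, zf_symm a b]
  rw [Finset.sum_congr rfl (fun a _ => Finset.sum_congr rfl (fun b _ => step a b))]
  exact sumallsq

lemma S4val : ∑ a : Fin n, ∑ b : Fin n, ∑ c : Fin n, ∑ d : Fin n,
    (if a ≠ b ∧ a ≠ c ∧ a ≠ d ∧ b ≠ c ∧ b ≠ d ∧ c ≠ d then zf n a b * zf n c d else 0)
    = ((n:ℝ)^2 - 4*(n:ℝ)) * ((n:ℝ)*((n:ℝ)^2-1)/6)^2
      + 2*(n:ℝ) * ((n:ℝ)*((n:ℝ)^4-1)/30) := by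
  simp only [pointwise, Finset.sum_add_distrib, Finset.sum_sub_distrib]
  rw [T0, T1, T2, T3, T4, T5, T6]
  ring

lemma S2val : ∑ x : Fin n, ∑ y : Fin n, (if x ≠ y then zf n x y else 0)
    = (n:ℝ) * ((n:ℝ)*((n:ℝ)^2-1)/6) := by
  have h : ∀ x y : Fin n, (if x ≠ y then zf n x y else 0) = zf n x y := by
    intro x y
    by_cases hxy : x = y
    · subst hxy; simp [zf_diag]
    · rw [if_pos hxy]
  simp only [h]
  exact sumall

lemma sum2_zf : (∑ v : Fin 2 → Fin n, if Injective v then zf n (v 0) (v 1) else 0)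
    = (n:ℝ) * ((n:ℝ)*((n:ℝ)^2-1)/6) :=
  (sum2_conv _).trans S2val

lemma sum4_zf : (∑ v : Fin 4 → Fin n,
      if Injective v then zf n (v 0) (v 1) * zf n (v 2) (v 3) else 0)
    = ((n:ℝ)^2 - 4*(n:ℝ)) * ((n:ℝ)*((n:ℝ)^2-1)/6)^2
      + 2*(n:ℝ) * ((n:ℝ)*((n:ℝ)^4-1)/30) :=
  (sum4_conv _).trans S4val

end Stmt12Aux

open Stmt12Aux Function in
/-- for a uniformly random cyclic listing of `{0,...,n-1}`, the covariance
of the weights of two disjoint cyclic edges (sharing no vertex) equals `n(n+1)/90`. -/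
theorem stmt12 (n : ℕ) [NeZero n] (hn : 5 ≤ n) (j k : Fin n)
    (hdisj : k ≠ j ∧ k ≠ j + 1 ∧ k + 1 ≠ j) :
    permE n (fun σ => cycZ n σ j * cycZ n σ k)
      - permE n (fun σ => cycZ n σ j) * permE n (fun σ => cycZ n σ k)
      = (n : ℝ) * ((n : ℝ) + 1) / 90 := by
  classical
  obtain ⟨hkj, hkj1, hk1j⟩ := hdisj
  have hone : (1 : Fin n) ≠ 0 := by
    intro h
    have := congrArg Fin.val h
    rw [Fin.val_one'] at this
    simp at this
    omega
  have hselfj : j ≠ j + 1 := by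
    intro h
    exact hone (add_left_cancel (show j + 1 = j + 0 by rw [add_zero, ← h]))
  have hselfk : k ≠ k + 1 := by
    intro h
    exact hone (add_left_cancel (show k + 1 = k + 0 by rw [add_zero, ← h]))
  have hj1k1 : j + 1 ≠ k + 1 := fun h => (Ne.symm hkj) (add_right_cancel h)
  have hu2j : Injective ![j, j + 1] := by
    rw [inj2]; exact hselfj
  have hu2k : Injective ![k, k + 1] := by
    rw [inj2]; exact hselfk
  have hu4 : Injective ![j, j + 1, k, k + 1] := by
    rw [inj4]
    exact ⟨hselfj, Ne.symm hkj, Ne.symm hk1j, Ne.symm hkj1, hj1k1, hselfk⟩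
  -- abbreviations
  set N : ℝ := (n : ℝ) with hNdef
  have hN5 : (5:ℝ) ≤ N := by rw [hNdef]; exact_mod_cast hn
  have hfac : (Nat.factorial n : ℝ) ≠ 0 :=
    Nat.cast_ne_zero.mpr (Nat.factorial_ne_zero n)
  have hD2 : (Nat.descFactorial n 2 : ℝ) = N * (N - 1) := by
    rw [Nat.descFactorial_succ, Nat.descFactorial_one]
    push_cast [Nat.cast_sub (by omega : 1 ≤ n)]
    ring
  have hD4 : (Nat.descFactorial n 4 : ℝ) = N * (N - 1) * (N - 2) * (N - 3) := by
    rw [Nat.descFactorial_succ, Nat.descFactorial_succ, Nat.descFactorial_succ,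
      Nat.descFactorial_one]
    push_cast [Nat.cast_sub (by omega : 1 ≤ n), Nat.cast_sub (by omega : 2 ≤ n),
      Nat.cast_sub (by omega : 3 ≤ n)]
    ring
  -- the three key identities
  have key2j : (N * (N - 1)) * (∑ σ : Equiv.Perm (Fin n), cycZ n σ j)
      = (Nat.factorial n : ℝ) * (N * (N*(N^2-1)/6)) := by
    have h := key_count (fun v => zf n (v 0) (v 1)) ![j, j + 1] hu2j
    rw [sum2_zf, hD2] at h
    exact h
  have key2k : (N * (N - 1)) * (∑ σ : Equiv.Perm (Fin n), cycZ n σ k)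
      = (Nat.factorial n : ℝ) * (N * (N*(N^2-1)/6)) := by
    have h := key_count (fun v => zf n (v 0) (v 1)) ![k, k + 1] hu2k
    rw [sum2_zf, hD2] at h
    exact h
  have key4 : (N * (N - 1) * (N - 2) * (N - 3))
        * (∑ σ : Equiv.Perm (Fin n), cycZ n σ j * cycZ n σ k)
      = (Nat.factorial n : ℝ)
        * ((N^2 - 4*N) * (N*(N^2-1)/6)^2 + 2*N * (N*(N^4-1)/30)) := by
    have h := key_count (fun v => zf n (v 0) (v 1) * zf n (v 2) (v 3))
      ![j, j + 1, k, k + 1] hu4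
    rw [sum4_zf, hD4] at h
    exact h
  -- solve for the sums
  have h1 : N ≠ 0 := ne_of_gt (by linarith)
  have h2 : N - 1 ≠ 0 := ne_of_gt (by linarith)
  have h3 : N - 2 ≠ 0 := ne_of_gt (by linarith)
  have h4 : N - 3 ≠ 0 := ne_of_gt (by linarith)
  have hsj : (∑ σ : Equiv.Perm (Fin n), cycZ n σ j)
      = (Nat.factorial n : ℝ) * (N * (N*(N^2-1)/6)) / (N * (N - 1)) := by
    rw [eq_div_iff (mul_ne_zero h1 h2)]
    linear_combination key2j
  have hsk : (∑ σ : Equiv.Perm (Fin n), cycZ n σ k)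
      = (Nat.factorial n : ℝ) * (N * (N*(N^2-1)/6)) / (N * (N - 1)) := by
    rw [eq_div_iff (mul_ne_zero h1 h2)]
    linear_combination key2k
  have hsjk : (∑ σ : Equiv.Perm (Fin n), cycZ n σ j * cycZ n σ k)
      = (Nat.factorial n : ℝ)
        * ((N^2 - 4*N) * (N*(N^2-1)/6)^2 + 2*N * (N*(N^4-1)/30))
        / (N * (N - 1) * (N - 2) * (N - 3)) := by
    rw [eq_div_iff (mul_ne_zero (mul_ne_zero (mul_ne_zero h1 h2) h3) h4)]
    linear_combination key4
  have hfc : ∀ x d : ℝ, ((Nat.factorial n : ℝ) * x / d) / (Nat.factorial n : ℝ) = x / d := by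
    intro x d
    rw [mul_div_assoc, mul_div_cancel_left₀ _ hfac]
  rw [permE, permE, permE, hsj, hsk, hsjk, hfc, hfc]
  rw [div_mul_div_comm]
  have hd2 : N * (N - 1) ≠ 0 := mul_ne_zero h1 h2
  have hd4 : N * (N - 1) * (N - 2) * (N - 3) ≠ 0 :=
    mul_ne_zero (mul_ne_zero (mul_ne_zero h1 h2) h3) h4
  rw [div_sub_div _ _ hd4 (mul_ne_zero hd2 hd2),
    div_eq_div_iff (mul_ne_zero hd4 (mul_ne_zero hd2 hd2)) (by norm_num : (90:ℝ) ≠ 0)]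
  ring
end

section
/- Let S_n = ∑_{k=1}^n Z_k where Z_k = D_k(n-D_k) are the cyclic increment weights of a uniformly random cyclic listing of {0,...,n-1}. Then E[S_n] = n²(n+1)/6 and Var(S_n) = n²(n+1)(n-2)(n-3)/180. -/
open Filter

section Aux
set_option linter.unusedVariables false

open Finset Equiv

lemma exists_perm_extend {n m : ℕ} (v w : Fin m → Fin n) (hv : Function.Injective v)
    (hw : Function.Injective w) : ∃ σ : Equiv.Perm (Fin n), ∀ i, σ (v i) = w i := by
  classical
  let e : {x // x ∈ Set.range v} ≃ {x // x ∈ Set.range w} :=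
    (Equiv.ofInjective v hv).symm.trans (Equiv.ofInjective w hw)
  refine ⟨e.extendSubtype, fun i => ?_⟩
  rw [Equiv.extendSubtype_apply_of_mem e (v i) ⟨i, rfl⟩]
  simp [e]

lemma card_fix {n m : ℕ} (v : Fin m → Fin n) (hv : Function.Injective v) :
    (Finset.univ.filter (fun σ : Equiv.Perm (Fin n) => ∀ i, σ (v i) = v i)).card
      = Nat.factorial (n - m) := by
  classical
  have hiff : ∀ σ : Equiv.Perm (Fin n), (∀ i, σ (v i) = v i) ↔
      (∀ a, ¬ (a ∉ Set.range v) → σ a = a) := by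
    intro σ
    constructor
    · intro h a ha
      obtain ⟨i, rfl⟩ := not_not.mp ha
      exact h i
    · intro h i
      exact h (v i) (not_not.mpr ⟨i, rfl⟩)
  rw [Finset.filter_congr (fun σ _ => hiff σ), ← Fintype.card_subtype,
    ← Fintype.card_congr (Equiv.Perm.subtypeEquivSubtypePerm (fun a => a ∉ Set.range v)),
    Fintype.card_perm]
  congr 1
  rw [Fintype.card_subtype_compl, Fintype.card_fin]
  congr 1
  calc Fintype.card {x // x ∈ Set.range v}
      = Fintype.card (Fin m) := Fintype.card_congr (Equiv.ofInjective v hv).symm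
    _ = m := Fintype.card_fin m

lemma card_fiber {n m : ℕ} (v w : Fin m → Fin n) (hv : Function.Injective v)
    (hw : Function.Injective w) :
    (Finset.univ.filter (fun σ : Equiv.Perm (Fin n) => (fun i => σ (v i)) = w)).card
      = Nat.factorial (n - m) := by
  classical
  obtain ⟨σ₀, hσ₀⟩ := exists_perm_extend v w hv hw
  rw [← card_fix v hv]
  apply Finset.card_nbij' (fun σ => σ₀⁻¹ * σ) (fun τ => σ₀ * τ)
  · intro σ hσ
    simp only [Finset.mem_coe, Finset.mem_filter, Finset.mem_univ, true_and] at hσ ⊢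
    intro i
    have : σ (v i) = w i := congrFun hσ i
    simp [Equiv.Perm.mul_apply, this, ← hσ₀ i]
  · intro τ hτ
    simp only [Finset.mem_coe, Finset.mem_filter, Finset.mem_univ, true_and] at hτ ⊢
    funext i
    simp [Equiv.Perm.mul_apply, hτ i, hσ₀ i]
  · intro σ _; simp [mul_assoc]
  · intro τ _; simp [← mul_assoc]

lemma perm_sum {n m : ℕ} (v : Fin m → Fin n) (hv : Function.Injective v)
    (F : (Fin m → Fin n) → ℝ) :
    ∑ σ : Equiv.Perm (Fin n), F (fun i => σ (v i))
      = (Nat.factorial (n - m) : ℝ)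
        * ∑ w ∈ Finset.univ.filter (fun w : Fin m → Fin n => Function.Injective w), F w := by
  classical
  rw [Finset.sum_comp F (fun σ : Equiv.Perm (Fin n) => fun i => σ (v i))]
  have himg : (Finset.univ : Finset (Equiv.Perm (Fin n))).image (fun σ => fun i => σ (v i))
      = Finset.univ.filter (fun w : Fin m → Fin n => Function.Injective w) := by
    ext w
    simp only [Finset.mem_image, Finset.mem_univ, true_and, Finset.mem_filter]
    constructor
    · rintro ⟨σ, rfl⟩
      exact fun a b hab => hv (σ.injective hab)
    · intro hw
      obtain ⟨σ, hσ⟩ := exists_perm_extend v w hv hw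
      exact ⟨σ, funext hσ⟩
  rw [himg, Finset.mul_sum]
  refine Finset.sum_congr rfl (fun w hw => ?_)
  simp only [Finset.mem_filter] at hw
  rw [card_fiber v w hv hw.2, nsmul_eq_mul]
open Finset

lemma inj2 {α : Type*} {x y : α} (h : x ≠ y) : Function.Injective ![x, y] := by
  intro a b hab
  fin_cases a <;> fin_cases b <;> simp_all

lemma inj3 {α : Type*} {x y z : α} (h1 : x ≠ y) (h2 : x ≠ z) (h3 : y ≠ z) :
    Function.Injective ![x, y, z] := by
  intro a b hab
  fin_cases a <;> fin_cases b <;> simp_all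

lemma inj4 {α : Type*} {x y z t : α} (h1 : x ≠ y) (h2 : x ≠ z) (h3 : x ≠ t)
    (h4 : y ≠ z) (h5 : y ≠ t) (h6 : z ≠ t) : Function.Injective ![x, y, z, t] := by
  intro a b hab
  fin_cases a <;> fin_cases b <;> simp_all

lemma sum_inj2 {N : ℕ} [NeZero N] (G : Fin N → Fin N → ℝ) :
    ∑ w ∈ Finset.univ.filter (fun w : Fin 2 → Fin N => Function.Injective w), G (w 0) (w 1)
      = ∑ x : Fin N, ∑ y ∈ Finset.univ.erase x, G x y := by
  classical
  rw [Finset.sum_sigma']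
  apply Finset.sum_nbij' (fun w => ⟨w 0, w 1⟩) (fun p => ![p.1, p.2])
  · intro w hw
    simp only [Finset.mem_filter, Finset.mem_univ, true_and] at hw
    simp only [Finset.mem_sigma, Finset.mem_univ, Finset.mem_erase, true_and, and_true]
    exact fun h => absurd (hw h) (by decide)
  · intro p hp
    simp only [Finset.mem_sigma, Finset.mem_univ, Finset.mem_erase, true_and, and_true] at hp
    simp only [Finset.mem_filter, Finset.mem_univ, true_and]
    exact inj2 (Ne.symm hp)
  · intro w hw; funext i; fin_cases i <;> simp
  · intro p hp; simp
  · intro w hw; simp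

lemma sum_inj3 {N : ℕ} [NeZero N] (G : Fin N → Fin N → Fin N → ℝ) :
    ∑ w ∈ Finset.univ.filter (fun w : Fin 3 → Fin N => Function.Injective w), G (w 0) (w 1) (w 2)
      = ∑ x : Fin N, ∑ y ∈ Finset.univ.erase x,
          ∑ z ∈ (Finset.univ.erase x).erase y, G x y z := by
  classical
  simp only [Finset.sum_sigma']
  apply Finset.sum_nbij' (fun w => ⟨w 0, w 1, w 2⟩) (fun p => ![p.1, p.2.1, p.2.2])
  · intro w hw
    simp only [Finset.mem_filter, Finset.mem_univ, true_and] at hw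
    simp only [Finset.mem_sigma, Finset.mem_univ, Finset.mem_erase, true_and, and_true]
    repeat' apply And.intro
    all_goals exact fun h => absurd (hw h) (by decide)
  · intro p hp
    simp only [Finset.mem_sigma, Finset.mem_univ, Finset.mem_erase, true_and, and_true] at hp
    simp only [Finset.mem_filter, Finset.mem_univ, true_and]
    refine inj3 (Ne.symm ?_) (Ne.symm ?_) (Ne.symm ?_) <;> tauto
  · intro w hw; funext i; fin_cases i <;> simp
  · intro p hp; simp
  · intro w hw; simp

lemma sum_inj4 {N : ℕ} [NeZero N] (G : Fin N → Fin N → Fin N → Fin N → ℝ) :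
    ∑ w ∈ Finset.univ.filter (fun w : Fin 4 → Fin N => Function.Injective w),
        G (w 0) (w 1) (w 2) (w 3)
      = ∑ x : Fin N, ∑ y ∈ Finset.univ.erase x, ∑ z ∈ (Finset.univ.erase x).erase y,
          ∑ t ∈ ((Finset.univ.erase x).erase y).erase z, G x y z t := by
  classical
  simp only [Finset.sum_sigma']
  apply Finset.sum_nbij' (fun w => ⟨w 0, w 1, w 2, w 3⟩) (fun p => ![p.1, p.2.1, p.2.2.1, p.2.2.2])
  · intro w hw
    simp only [Finset.mem_filter, Finset.mem_univ, true_and] at hw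
    simp only [Finset.mem_sigma, Finset.mem_univ, Finset.mem_erase, true_and, and_true]
    repeat' apply And.intro
    all_goals exact fun h => absurd (hw h) (by decide)
  · intro p hp
    simp only [Finset.mem_sigma, Finset.mem_univ, Finset.mem_erase, true_and, and_true] at hp
    simp only [Finset.mem_filter, Finset.mem_univ, true_and]
    refine inj4 (Ne.symm ?_) (Ne.symm ?_) (Ne.symm ?_) (Ne.symm ?_) (Ne.symm ?_) (Ne.symm ?_) <;>
      tauto
  · intro w hw; funext i; fin_cases i <;> simp
  · intro p hp; simp
  · intro w hw; simp
open Finset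

lemma psum1 (n : ℕ) : ∑ i ∈ Finset.range n, (i : ℝ) = n * (n - 1) / 2 := by
  induction n with
  | zero => simp
  | succ k ih => rw [Finset.sum_range_succ, ih]; push_cast; ring

lemma psum2 (n : ℕ) : ∑ i ∈ Finset.range n, (i : ℝ) ^ 2 = n * (n - 1) * (2 * n - 1) / 6 := by
  induction n with
  | zero => simp
  | succ k ih => rw [Finset.sum_range_succ, ih]; push_cast; ring

lemma psum3 (n : ℕ) : ∑ i ∈ Finset.range n, (i : ℝ) ^ 3 = (n * (n - 1) / 2) ^ 2 := by
  induction n with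
  | zero => simp
  | succ k ih => rw [Finset.sum_range_succ, ih]; push_cast; ring

lemma psum4 (n : ℕ) : ∑ i ∈ Finset.range n, (i : ℝ) ^ 4
    = n * (n - 1) * (2 * n - 1) * (3 * n ^ 2 - 3 * n - 1) / 30 := by
  induction n with
  | zero => simp
  | succ k ih => rw [Finset.sum_range_succ, ih]; push_cast; ring

noncomputable def gfun (n : ℕ) [NeZero n] (d : Fin n) : ℝ :=
  ((d : ℕ) : ℝ) * ((n : ℝ) - ((d : ℕ) : ℝ))

lemma gfun_zero (n : ℕ) [NeZero n] : gfun n 0 = 0 := by simp [gfun]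

lemma gfun_neg (n : ℕ) [NeZero n] (d : Fin n) : gfun n (-d) = gfun n d := by
  rcases eq_or_ne d 0 with rfl | hd
  · simp
  · have hdpos : 0 < (d : ℕ) := by
      rcases Nat.eq_zero_or_pos (d : ℕ) with h | h
      · exact absurd (Fin.ext h : d = 0) hd
      · exact h
    have hdn : (d : ℕ) < n := d.isLt
    have hneg : ((-d : Fin n) : ℕ) = n - (d : ℕ) := by
      rw [Fin.coe_neg]
      exact Nat.mod_eq_of_lt (by omega)
    unfold gfun
    rw [hneg]
    have : ((n - (d : ℕ) : ℕ) : ℝ) = (n : ℝ) - ((d : ℕ) : ℝ) := by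
      push_cast [Nat.cast_sub hdn.le]; ring
    rw [this]; ring

lemma sum_gfun_sub (n : ℕ) [NeZero n] (x : Fin n) :
    ∑ y : Fin n, gfun n (y - x) = ∑ d : Fin n, gfun n d :=
  Fintype.sum_equiv (Equiv.subRight x) _ _ (fun y => rfl)

lemma sum_gfun_sub' (n : ℕ) [NeZero n] (x : Fin n) (p : ℕ) :
    ∑ y : Fin n, (gfun n (y - x)) ^ p = ∑ d : Fin n, (gfun n d) ^ p :=
  Fintype.sum_equiv (Equiv.subRight x) _ _ (fun y => rfl)

lemma Tval (n : ℕ) [NeZero n] :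
    ∑ d : Fin n, gfun n d = (n : ℝ) * ((n : ℝ) ^ 2 - 1) / 6 := by
  rw [show (∑ d : Fin n, gfun n d) = ∑ i ∈ Finset.range n, ((i : ℝ) * ((n : ℝ) - (i : ℝ))) from
    Fin.sum_univ_eq_sum_range (fun i => ((i : ℝ) * ((n : ℝ) - (i : ℝ)))) n]
  have : ∀ i ∈ Finset.range n, (i : ℝ) * ((n : ℝ) - i) = (n : ℝ) * (i : ℝ) - (i : ℝ) ^ 2 := by
    intro i _; ring
  rw [Finset.sum_congr rfl this, Finset.sum_sub_distrib, ← Finset.mul_sum, psum1, psum2]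
  ring

lemma Qval (n : ℕ) [NeZero n] :
    ∑ d : Fin n, (gfun n d) ^ 2
      = (n:ℝ)^2 * ((n:ℝ) * ((n:ℝ) - 1) * (2*(n:ℝ) - 1) / 6)
        - 2*(n:ℝ) * (((n:ℝ) * ((n:ℝ) - 1) / 2) ^ 2)
        + (n:ℝ) * ((n:ℝ) - 1) * (2*(n:ℝ) - 1) * (3*(n:ℝ)^2 - 3*(n:ℝ) - 1) / 30 := by
  rw [show (∑ d : Fin n, (gfun n d) ^ 2)
      = ∑ i ∈ Finset.range n, ((i : ℝ) * ((n : ℝ) - (i : ℝ))) ^ 2 from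
    Fin.sum_univ_eq_sum_range (fun i => ((i : ℝ) * ((n : ℝ) - (i : ℝ))) ^ 2) n]
  have : ∀ i ∈ Finset.range n, ((i : ℝ) * ((n : ℝ) - i)) ^ 2
      = (n:ℝ)^2 * (i:ℝ)^2 - 2*(n:ℝ) * (i:ℝ)^3 + (i:ℝ)^4 := by
    intro i _; ring
  rw [Finset.sum_congr rfl this, Finset.sum_add_distrib, Finset.sum_sub_distrib,
    ← Finset.mul_sum, ← Finset.mul_sum, psum2, psum3, psum4]

section eval
variable (n : ℕ) [NeZero n]

lemma sum_gfun_subl (x : Fin n) :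
    ∑ y : Fin n, gfun n (x - y) = ∑ d : Fin n, gfun n d :=
  Fintype.sum_equiv (Equiv.subLeft x) _ _ (fun _ => rfl)

lemma gfun_comm (x y : Fin n) : gfun n (x - y) = gfun n (y - x) := by
  rw [← neg_sub y x, gfun_neg]

lemma erase_sum_g (x : Fin n) :
    ∑ y ∈ Finset.univ.erase x, gfun n (y - x) = ∑ d : Fin n, gfun n d := by
  rw [Finset.sum_erase_eq_sub (Finset.mem_univ x), sum_gfun_sub]
  simp [gfun_zero]

lemma erase_sum_g2 (x : Fin n) :
    ∑ y ∈ Finset.univ.erase x, (gfun n (y - x)) ^ 2 = ∑ d : Fin n, (gfun n d) ^ 2 := by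
  rw [Finset.sum_erase_eq_sub (Finset.mem_univ x), sum_gfun_sub']
  simp [gfun_zero]

lemma eval2a :
    ∑ x : Fin n, ∑ y ∈ Finset.univ.erase x, gfun n (y - x)
      = (n : ℝ) * (∑ d : Fin n, gfun n d) := by
  rw [Finset.sum_congr rfl (fun x _ => erase_sum_g n x)]
  simp [Finset.card_univ, mul_comm]

lemma eval2b :
    ∑ x : Fin n, ∑ y ∈ Finset.univ.erase x, (gfun n (y - x)) ^ 2
      = (n : ℝ) * (∑ d : Fin n, (gfun n d) ^ 2) := by
  rw [Finset.sum_congr rfl (fun x _ => erase_sum_g2 n x)]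
  simp [Finset.card_univ, mul_comm]

lemma eval3 :
    ∑ x : Fin n, ∑ y ∈ Finset.univ.erase x, ∑ z ∈ (Finset.univ.erase x).erase y,
        gfun n (y - x) * gfun n (z - y)
      = (n : ℝ) * ((∑ d : Fin n, gfun n d) ^ 2 - ∑ d : Fin n, (gfun n d) ^ 2) := by
  set T := ∑ d : Fin n, gfun n d with hT
  set Q := ∑ d : Fin n, (gfun n d) ^ 2 with hQ
  have inner : ∀ x y : Fin n, y ≠ x →
      ∑ z ∈ (Finset.univ.erase x).erase y, gfun n (z - y) = T - gfun n (x - y) := by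
    intro x y hyx
    rw [Finset.sum_erase_eq_sub (Finset.mem_erase.mpr ⟨hyx, Finset.mem_univ y⟩),
      Finset.sum_erase_eq_sub (Finset.mem_univ x), sum_gfun_sub]
    simp [gfun_zero, hT]
  have middle : ∀ x : Fin n,
      ∑ y ∈ Finset.univ.erase x, gfun n (y - x) * (T - gfun n (x - y)) = T ^ 2 - Q := by
    intro x
    have : ∀ y ∈ Finset.univ.erase x, gfun n (y - x) * (T - gfun n (x - y))
        = T * gfun n (y - x) - (gfun n (y - x)) ^ 2 := by
      intro y _
      rw [gfun_comm]; ring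
    rw [Finset.sum_congr rfl this, Finset.sum_sub_distrib, ← Finset.mul_sum,
      erase_sum_g, erase_sum_g2, ← hT, ← hQ]
    ring
  have : ∀ x : Fin n, ∑ y ∈ Finset.univ.erase x, ∑ z ∈ (Finset.univ.erase x).erase y,
      gfun n (y - x) * gfun n (z - y) = T ^ 2 - Q := by
    intro x
    rw [← middle x]
    refine Finset.sum_congr rfl (fun y hy => ?_)
    rw [← Finset.mul_sum, inner x y (Finset.mem_erase.mp hy).1]
  rw [Finset.sum_congr rfl (fun x _ => this x)]
  simp [Finset.card_univ, mul_comm]; ring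

lemma eval4 (hn : 4 ≤ n) :
    ∑ a : Fin n, ∑ b ∈ Finset.univ.erase a, ∑ c ∈ (Finset.univ.erase a).erase b,
        ∑ d ∈ ((Finset.univ.erase a).erase b).erase c, gfun n (b - a) * gfun n (d - c)
      = (n : ℝ) * (((n : ℝ) - 4) * (∑ d : Fin n, gfun n d) ^ 2
          + 2 * ∑ d : Fin n, (gfun n d) ^ 2) := by
  set T := ∑ d : Fin n, gfun n d with hT
  set Q := ∑ d : Fin n, (gfun n d) ^ 2 with hQ
  have inner : ∀ a b c : Fin n, b ≠ a → c ≠ a → c ≠ b →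
      ∑ d ∈ ((Finset.univ.erase a).erase b).erase c, gfun n (d - c)
        = T - gfun n (a - c) - gfun n (b - c) := by
    intro a b c hba hca hcb
    rw [Finset.sum_erase_eq_sub
        (Finset.mem_erase.mpr ⟨hcb, Finset.mem_erase.mpr ⟨hca, Finset.mem_univ c⟩⟩),
      Finset.sum_erase_eq_sub (Finset.mem_erase.mpr ⟨hba, Finset.mem_univ b⟩),
      Finset.sum_erase_eq_sub (Finset.mem_univ a), sum_gfun_sub]
    simp [gfun_zero, hT]
  have level_c : ∀ a b : Fin n, b ≠ a →
      ∑ c ∈ (Finset.univ.erase a).erase b, (T - gfun n (a - c) - gfun n (b - c))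
        = ((n : ℝ) - 4) * T + 2 * gfun n (b - a) := by
    intro a b hba
    have hca : ∑ c ∈ (Finset.univ.erase a).erase b, gfun n (a - c) = T - gfun n (a - b) := by
      rw [Finset.sum_erase_eq_sub (Finset.mem_erase.mpr ⟨hba, Finset.mem_univ b⟩),
        Finset.sum_erase_eq_sub (Finset.mem_univ a), sum_gfun_subl]
      simp [gfun_zero, hT]
    have hcb : ∑ c ∈ (Finset.univ.erase a).erase b, gfun n (b - c) = T - gfun n (b - a) := by
      rw [Finset.sum_erase_eq_sub (Finset.mem_erase.mpr ⟨hba, Finset.mem_univ b⟩),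
        Finset.sum_erase_eq_sub (Finset.mem_univ a), sum_gfun_subl]
      simp [gfun_zero, hT]
    have hcard : ((Finset.univ.erase a).erase b).card = n - 2 := by
      rw [Finset.card_erase_of_mem (Finset.mem_erase.mpr ⟨hba, Finset.mem_univ b⟩),
        Finset.card_erase_of_mem (Finset.mem_univ a), Finset.card_univ, Fintype.card_fin]
      omega
    have hcast : (((n - 2 : ℕ)) : ℝ) = (n : ℝ) - 2 := by
      have : (2 : ℕ) ≤ n := by omega
      push_cast [Nat.cast_sub this]
      ring
    rw [Finset.sum_sub_distrib, Finset.sum_sub_distrib, hca, hcb, Finset.sum_const, hcard,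
      nsmul_eq_mul, hcast, gfun_comm n a b]
    ring
  have level_b : ∀ a : Fin n,
      ∑ b ∈ Finset.univ.erase a, gfun n (b - a) * (((n : ℝ) - 4) * T + 2 * gfun n (b - a))
        = ((n : ℝ) - 4) * T ^ 2 + 2 * Q := by
    intro a
    have : ∀ b ∈ Finset.univ.erase a, gfun n (b - a) * (((n : ℝ) - 4) * T + 2 * gfun n (b - a))
        = ((n : ℝ) - 4) * T * gfun n (b - a) + 2 * (gfun n (b - a)) ^ 2 := by
      intro b _; ring
    rw [Finset.sum_congr rfl this, Finset.sum_add_distrib, ← Finset.mul_sum, ← Finset.mul_sum,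
      erase_sum_g, erase_sum_g2, ← hT, ← hQ]
    ring
  have main : ∀ a : Fin n, ∑ b ∈ Finset.univ.erase a, ∑ c ∈ (Finset.univ.erase a).erase b,
      ∑ d ∈ ((Finset.univ.erase a).erase b).erase c, gfun n (b - a) * gfun n (d - c)
        = ((n : ℝ) - 4) * T ^ 2 + 2 * Q := by
    intro a
    rw [← level_b a]
    refine Finset.sum_congr rfl (fun b hb => ?_)
    have hba := (Finset.mem_erase.mp hb).1
    rw [← level_c a b hba, Finset.mul_sum]
    refine Finset.sum_congr rfl (fun c hc => ?_)
    have hcb := (Finset.mem_erase.mp hc).1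
    have hca := (Finset.mem_erase.mp (Finset.mem_erase.mp hc).2).1
    rw [← Finset.mul_sum, inner a b c hba hca hcb]
  rw [Finset.sum_congr rfl (fun a _ => main a), Finset.sum_const, Finset.card_univ,
    Fintype.card_fin, nsmul_eq_mul]

end eval

lemma shift_ne {m : ℕ} (k c d : Fin (m + 4)) (h : (c : ℕ) ≠ (d : ℕ)) : k + c ≠ k + d :=
  fun hh => h (congrArg Fin.val (add_left_cancel hh))

lemma finv1 (m : ℕ) : ((1 : Fin (m + 4)) : ℕ) = 1 := by simp [Fin.val_one]
lemma finv2 (m : ℕ) : ((2 : Fin (m + 4)) : ℕ) = 2 := by simp [Fin.val_two]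
lemma finvm1 (m : ℕ) : ((-1 : Fin (m + 4)) : ℕ) = m + 3 := by simp [Fin.coe_neg]

lemma fne1 {m : ℕ} (k : Fin (m + 4)) : k + 1 ≠ k := by
  have := shift_ne k 1 0 (by simp [finv1])
  simpa using this

lemma fne2 {m : ℕ} (k : Fin (m + 4)) : k + 2 ≠ k := by
  have := shift_ne k 2 0 (by rw [finv2]; simp)
  simpa using this

lemma fne21 {m : ℕ} (k : Fin (m + 4)) : k + 2 ≠ k + 1 :=
  shift_ne k 2 1 (by rw [finv1, finv2]; simp)

lemma fnem1 {m : ℕ} (k : Fin (m + 4)) : k - 1 ≠ k := by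
  have := shift_ne k (-1) 0 (by simp [finvm1])
  simpa [← sub_eq_add_neg] using this

lemma fnem11 {m : ℕ} (k : Fin (m + 4)) : k - 1 ≠ k + 1 := by
  have := shift_ne k (-1) 1 (by simp [finvm1, finv1])
  simpa [← sub_eq_add_neg] using this

lemma addone_sub_one {m : ℕ} (k : Fin (m + 4)) : (k + 1) + 1 = k + 2 := by
  rw [add_assoc]; congr 1

lemma subone_add_one {m : ℕ} (k : Fin (m + 4)) : (k - 1) + 1 = k := sub_add_cancel k 1

end Aux
section Main
open Finset
variable {m : ℕ} [NeZero (m + 4)]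

lemma cycZ_eq (σ : Equiv.Perm (Fin (m + 4))) (k : Fin (m + 4)) :
    cycZ (m + 4) σ k = gfun (m + 4) (σ (k + 1) - σ k) := rfl

lemma sum_cycZ_single (k : Fin (m + 4)) :
    ∑ σ : Equiv.Perm (Fin (m + 4)), cycZ (m + 4) σ k
      = ((m + 2).factorial : ℝ) * (((m : ℝ) + 4) * ∑ d : Fin (m + 4), gfun (m + 4) d) := by
  have h42 : m + 4 - 2 = m + 2 := by omega
  have hps := perm_sum (n := m + 4) ![k, k + 1] (inj2 (Ne.symm (fne1 k)))
      (fun w => gfun (m + 4) (w 1 - w 0))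
  rw [sum_inj2 (fun x y => gfun (m + 4) (y - x)), eval2a, h42] at hps
  calc ∑ σ : Equiv.Perm (Fin (m + 4)), cycZ (m + 4) σ k
      = ∑ σ : Equiv.Perm (Fin (m + 4)),
          (fun w : Fin 2 → Fin (m + 4) => gfun (m + 4) (w 1 - w 0))
            (fun i => σ (![k, k + 1] i)) := by
        refine Finset.sum_congr rfl (fun σ _ => ?_)
        simp [cycZ_eq]
    _ = ((m + 2).factorial : ℝ) * (((m : ℝ) + 4) * ∑ d : Fin (m + 4), gfun (m + 4) d) := by
        rw [hps]
        push_cast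
        ring
end Main

section Main2

open Finset

variable {m : ℕ} [NeZero (m + 4)]

lemma diag_term (k : Fin (m + 4)) :
    ∑ σ : Equiv.Perm (Fin (m + 4)), cycZ (m + 4) σ k * cycZ (m + 4) σ k
      = ((m + 2).factorial : ℝ)
          * (((m : ℝ) + 4) * ∑ d : Fin (m + 4), (gfun (m + 4) d) ^ 2) := by
  have h42 : m + 4 - 2 = m + 2 := by omega
  have hps := perm_sum (n := m + 4) ![k, k + 1] (inj2 (Ne.symm (fne1 k)))
      (fun w => (gfun (m + 4) (w 1 - w 0)) ^ 2)
  rw [sum_inj2 (fun x y => (gfun (m + 4) (y - x)) ^ 2), eval2b, h42] at hps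
  calc ∑ σ : Equiv.Perm (Fin (m + 4)), cycZ (m + 4) σ k * cycZ (m + 4) σ k
      = ∑ σ : Equiv.Perm (Fin (m + 4)),
          (fun w : Fin 2 → Fin (m + 4) => (gfun (m + 4) (w 1 - w 0)) ^ 2)
            (fun i => σ (![k, k + 1] i)) := by
        refine Finset.sum_congr rfl (fun σ _ => ?_)
        simp only [cycZ_eq, Matrix.cons_val_one, Matrix.cons_val_zero, Matrix.head_cons]
        ring
    _ = ((m + 2).factorial : ℝ)
          * (((m : ℝ) + 4) * ∑ d : Fin (m + 4), (gfun (m + 4) d) ^ 2) := by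
        rw [hps]; push_cast; ring

lemma adj1_term (k : Fin (m + 4)) :
    ∑ σ : Equiv.Perm (Fin (m + 4)), cycZ (m + 4) σ k * cycZ (m + 4) σ (k + 1)
      = ((m + 1).factorial : ℝ) * (((m : ℝ) + 4)
          * ((∑ d : Fin (m + 4), gfun (m + 4) d) ^ 2
            - ∑ d : Fin (m + 4), (gfun (m + 4) d) ^ 2)) := by
  have h43 : m + 4 - 3 = m + 1 := by omega
  have hps := perm_sum (n := m + 4) ![k, k + 1, k + 2]
      (inj3 (Ne.symm (fne1 k)) (Ne.symm (fne2 k)) (Ne.symm (fne21 k)))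
      (fun w => gfun (m + 4) (w 1 - w 0) * gfun (m + 4) (w 2 - w 1))
  rw [sum_inj3 (fun x y z => gfun (m + 4) (y - x) * gfun (m + 4) (z - y)), eval3, h43] at hps
  calc ∑ σ : Equiv.Perm (Fin (m + 4)), cycZ (m + 4) σ k * cycZ (m + 4) σ (k + 1)
      = ∑ σ : Equiv.Perm (Fin (m + 4)),
          (fun w : Fin 3 → Fin (m + 4) => gfun (m + 4) (w 1 - w 0) * gfun (m + 4) (w 2 - w 1))
            (fun i => σ (![k, k + 1, k + 2] i)) := by
        refine Finset.sum_congr rfl (fun σ _ => ?_)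
        simp only [cycZ_eq, addone_sub_one, Matrix.cons_val_one, Matrix.cons_val_zero,
          Matrix.head_cons, Matrix.cons_val_two, Matrix.tail_cons]
    _ = _ := by rw [hps]; push_cast; ring

lemma adj2_term (k : Fin (m + 4)) :
    ∑ σ : Equiv.Perm (Fin (m + 4)), cycZ (m + 4) σ k * cycZ (m + 4) σ (k - 1)
      = ((m + 1).factorial : ℝ) * (((m : ℝ) + 4)
          * ((∑ d : Fin (m + 4), gfun (m + 4) d) ^ 2
            - ∑ d : Fin (m + 4), (gfun (m + 4) d) ^ 2)) := by
  have h43 : m + 4 - 3 = m + 1 := by omega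
  have hps := perm_sum (n := m + 4) ![k - 1, k, k + 1]
      (inj3 (fnem1 k) (fnem11 k) (Ne.symm (fne1 k)))
      (fun w => gfun (m + 4) (w 2 - w 1) * gfun (m + 4) (w 1 - w 0))
  rw [sum_inj3 (fun x y z => gfun (m + 4) (z - y) * gfun (m + 4) (y - x))] at hps
  have hswap : ∑ x : Fin (m + 4), ∑ y ∈ Finset.univ.erase x,
      ∑ z ∈ (Finset.univ.erase x).erase y, gfun (m + 4) (z - y) * gfun (m + 4) (y - x)
        = ∑ x : Fin (m + 4), ∑ y ∈ Finset.univ.erase x,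
      ∑ z ∈ (Finset.univ.erase x).erase y, gfun (m + 4) (y - x) * gfun (m + 4) (z - y) := by
    exact Finset.sum_congr rfl fun x _ => Finset.sum_congr rfl fun y _ =>
      Finset.sum_congr rfl fun z _ => mul_comm _ _
  rw [hswap, eval3, h43] at hps
  calc ∑ σ : Equiv.Perm (Fin (m + 4)), cycZ (m + 4) σ k * cycZ (m + 4) σ (k - 1)
      = ∑ σ : Equiv.Perm (Fin (m + 4)),
          (fun w : Fin 3 → Fin (m + 4) => gfun (m + 4) (w 2 - w 1) * gfun (m + 4) (w 1 - w 0))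
            (fun i => σ (![k - 1, k, k + 1] i)) := by
        refine Finset.sum_congr rfl (fun σ _ => ?_)
        simp only [cycZ_eq, subone_add_one, Matrix.cons_val_one, Matrix.cons_val_zero,
          Matrix.head_cons, Matrix.cons_val_two, Matrix.tail_cons]
    _ = _ := by rw [hps]; push_cast; ring

lemma rest_term (k l : Fin (m + 4)) (h1 : l ≠ k) (h2 : l ≠ k + 1) (h3 : l ≠ k - 1) :
    ∑ σ : Equiv.Perm (Fin (m + 4)), cycZ (m + 4) σ k * cycZ (m + 4) σ l
      = (m.factorial : ℝ) * (((m : ℝ) + 4)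
          * ((m : ℝ) * (∑ d : Fin (m + 4), gfun (m + 4) d) ^ 2
            + 2 * ∑ d : Fin (m + 4), (gfun (m + 4) d) ^ 2)) := by
  have h44 : m + 4 - 4 = m := by omega
  have hkl1 : k ≠ l + 1 := by
    intro h
    exact h3 (by rw [h, add_sub_cancel_right])
  have hkl5 : k + 1 ≠ l + 1 := fun h => h1 (add_right_cancel h).symm
  have hps := perm_sum (n := m + 4) ![k, k + 1, l, l + 1]
      (inj4 (Ne.symm (fne1 k)) (Ne.symm h1) hkl1 (Ne.symm h2) hkl5 (Ne.symm (fne1 l)))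
      (fun w => gfun (m + 4) (w 1 - w 0) * gfun (m + 4) (w 3 - w 2))
  rw [sum_inj4 (fun x y z t => gfun (m + 4) (y - x) * gfun (m + 4) (t - z)),
    eval4 (m + 4) (by omega), h44] at hps
  calc ∑ σ : Equiv.Perm (Fin (m + 4)), cycZ (m + 4) σ k * cycZ (m + 4) σ l
      = ∑ σ : Equiv.Perm (Fin (m + 4)),
          (fun w : Fin 4 → Fin (m + 4) => gfun (m + 4) (w 1 - w 0) * gfun (m + 4) (w 3 - w 2))
            (fun i => σ (![k, k + 1, l, l + 1] i)) := by
        refine Finset.sum_congr rfl (fun σ _ => ?_)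
        simp only [cycZ_eq, Matrix.cons_val_one, Matrix.cons_val_zero, Matrix.head_cons,
          Matrix.cons_val_two, Matrix.tail_cons, Matrix.cons_val_three]
    _ = _ := by rw [hps]; push_cast; ring

lemma split_l (k : Fin (m + 4)) :
    ∑ l : Fin (m + 4), ∑ σ : Equiv.Perm (Fin (m + 4)), cycZ (m + 4) σ k * cycZ (m + 4) σ l
      = ((m + 2).factorial : ℝ)
            * (((m : ℝ) + 4) * ∑ d : Fin (m + 4), (gfun (m + 4) d) ^ 2)
        + 2 * (((m + 1).factorial : ℝ) * (((m : ℝ) + 4)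
            * ((∑ d : Fin (m + 4), gfun (m + 4) d) ^ 2
              - ∑ d : Fin (m + 4), (gfun (m + 4) d) ^ 2)))
        + ((m : ℝ) + 1) * ((m.factorial : ℝ) * (((m : ℝ) + 4)
            * ((m : ℝ) * (∑ d : Fin (m + 4), gfun (m + 4) d) ^ 2
              + 2 * ∑ d : Fin (m + 4), (gfun (m + 4) d) ^ 2))) := by
  have hmem1 : (k : Fin (m + 4)) ∈ Finset.univ := Finset.mem_univ k
  have hmem2 : k + 1 ∈ Finset.univ.erase k :=
    Finset.mem_erase.mpr ⟨fne1 k, Finset.mem_univ _⟩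
  have hmem3 : k - 1 ∈ (Finset.univ.erase k).erase (k + 1) :=
    Finset.mem_erase.mpr ⟨fnem11 k, Finset.mem_erase.mpr ⟨fnem1 k, Finset.mem_univ _⟩⟩
  rw [← Finset.add_sum_erase _ _ hmem1, ← Finset.add_sum_erase _ _ hmem2,
    ← Finset.add_sum_erase _ _ hmem3, diag_term k, adj1_term k, adj2_term k]
  have hrest : ∀ l ∈ ((Finset.univ.erase k).erase (k + 1)).erase (k - 1),
      (∑ σ : Equiv.Perm (Fin (m + 4)), cycZ (m + 4) σ k * cycZ (m + 4) σ l)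
        = (m.factorial : ℝ) * (((m : ℝ) + 4)
            * ((m : ℝ) * (∑ d : Fin (m + 4), gfun (m + 4) d) ^ 2
              + 2 * ∑ d : Fin (m + 4), (gfun (m + 4) d) ^ 2)) := by
    intro l hl
    have e1 := Finset.mem_erase.mp hl
    have e2 := Finset.mem_erase.mp e1.2
    have e3 := Finset.mem_erase.mp e2.2
    exact rest_term k l e3.1 e2.1 e1.1
  rw [Finset.sum_congr rfl hrest, Finset.sum_const]
  have hcard : (((Finset.univ.erase k).erase (k + 1)).erase (k - 1)).card = m + 1 := by
    rw [Finset.card_erase_of_mem hmem3, Finset.card_erase_of_mem hmem2,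
      Finset.card_erase_of_mem hmem1, Finset.card_univ, Fintype.card_fin]
    omega
  rw [hcard, nsmul_eq_mul]
  push_cast
  ring

lemma sum_sq_total :
    ∑ σ : Equiv.Perm (Fin (m + 4)), (∑ k : Fin (m + 4), cycZ (m + 4) σ k) ^ 2
      = ((m : ℝ) + 4) * (((m + 2).factorial : ℝ)
            * (((m : ℝ) + 4) * ∑ d : Fin (m + 4), (gfun (m + 4) d) ^ 2)
        + 2 * (((m + 1).factorial : ℝ) * (((m : ℝ) + 4)
            * ((∑ d : Fin (m + 4), gfun (m + 4) d) ^ 2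
              - ∑ d : Fin (m + 4), (gfun (m + 4) d) ^ 2)))
        + ((m : ℝ) + 1) * ((m.factorial : ℝ) * (((m : ℝ) + 4)
            * ((m : ℝ) * (∑ d : Fin (m + 4), gfun (m + 4) d) ^ 2
              + 2 * ∑ d : Fin (m + 4), (gfun (m + 4) d) ^ 2)))) := by
  have hexpand : ∀ σ : Equiv.Perm (Fin (m + 4)),
      (∑ k : Fin (m + 4), cycZ (m + 4) σ k) ^ 2
        = ∑ k : Fin (m + 4), ∑ l : Fin (m + 4), cycZ (m + 4) σ k * cycZ (m + 4) σ l := by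
    intro σ
    rw [pow_two, Finset.sum_mul_sum]
  rw [Finset.sum_congr rfl (fun σ _ => hexpand σ), Finset.sum_comm]
  have hswap : ∀ k : Fin (m + 4),
      ∑ σ : Equiv.Perm (Fin (m + 4)), ∑ l : Fin (m + 4), cycZ (m + 4) σ k * cycZ (m + 4) σ l
        = ∑ l : Fin (m + 4), ∑ σ : Equiv.Perm (Fin (m + 4)),
            cycZ (m + 4) σ k * cycZ (m + 4) σ l := fun k => Finset.sum_comm
  rw [Finset.sum_congr rfl (fun k _ => hswap k), Finset.sum_congr rfl (fun k _ => split_l k),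
    Finset.sum_const, Finset.card_univ, Fintype.card_fin, nsmul_eq_mul]
  push_cast
  ring

end Main2

section Final

open Finset

lemma sum_cycZ_total (m : ℕ) [NeZero (m + 4)] :
    ∑ σ : Equiv.Perm (Fin (m + 4)), ∑ k : Fin (m + 4), cycZ (m + 4) σ k
      = ((m : ℝ) + 4) * (((m + 2).factorial : ℝ)
          * (((m : ℝ) + 4) * ∑ d : Fin (m + 4), gfun (m + 4) d)) := by
  rw [Finset.sum_comm, Finset.sum_congr rfl (fun k _ => sum_cycZ_single k),
    Finset.sum_const, Finset.card_univ, Fintype.card_fin, nsmul_eq_mul]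
  push_cast
  ring

end Final

/-- for `S_n = ∑_k Z_k` over a uniformly random cyclic listing,
`E[S_n] = n²(n+1)/6` and `Var(S_n) = n²(n+1)(n-2)(n-3)/180`. -/
theorem stmt13 (n : ℕ) [NeZero n] (hn : 4 ≤ n) :
    (permE n (fun σ => ∑ k : Fin n, cycZ n σ k) = (n : ℝ) ^ 2 * ((n : ℝ) + 1) / 6) ∧
    (permE n (fun σ => ((∑ k : Fin n, cycZ n σ k) - (n : ℝ) ^ 2 * ((n : ℝ) + 1) / 6) ^ 2)
      = (n : ℝ) ^ 2 * ((n : ℝ) + 1) * ((n : ℝ) - 2) * ((n : ℝ) - 3) / 180) := by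
  obtain ⟨m, rfl⟩ : ∃ m, n = m + 4 := ⟨n - 4, by omega⟩
  have hT := Tval (m + 4)
  have hQ := Qval (m + 4)
  have hfac1 : ((m + 1).factorial : ℝ) = ((m : ℝ) + 1) * (m.factorial : ℝ) := by
    rw [Nat.factorial_succ]; push_cast; ring
  have hfac2 : ((m + 2).factorial : ℝ)
      = ((m : ℝ) + 2) * ((m : ℝ) + 1) * (m.factorial : ℝ) := by
    rw [show m + 2 = (m + 1) + 1 from rfl, Nat.factorial_succ, Nat.factorial_succ]
    push_cast; ring
  have hfac4 : ((m + 4).factorial : ℝ)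
      = ((m : ℝ) + 4) * ((m : ℝ) + 3) * ((m : ℝ) + 2) * ((m : ℝ) + 1) * (m.factorial : ℝ) := by
    rw [show m + 4 = (((m + 1) + 1) + 1) + 1 from rfl, Nat.factorial_succ, Nat.factorial_succ,
      Nat.factorial_succ, Nat.factorial_succ]
    push_cast; ring
  have hfne : (m.factorial : ℝ) ≠ 0 := Nat.cast_ne_zero.mpr m.factorial_ne_zero
  constructor
  · show (∑ σ : Equiv.Perm (Fin (m + 4)), ∑ k : Fin (m + 4), cycZ (m + 4) σ k)
        / ((m + 4).factorial : ℝ) = _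
    rw [sum_cycZ_total, hT, hfac2, hfac4]
    push_cast
    rw [div_eq_iff (by positivity)]
    ring
  · show (∑ σ : Equiv.Perm (Fin (m + 4)),
        ((∑ k : Fin (m + 4), cycZ (m + 4) σ k)
          - ((m + 4 : ℕ) : ℝ) ^ 2 * (((m + 4 : ℕ) : ℝ) + 1) / 6) ^ 2)
        / ((m + 4).factorial : ℝ) = _
    have hexp : ∀ (c : ℝ) (σ : Equiv.Perm (Fin (m + 4))),
        ((∑ k : Fin (m + 4), cycZ (m + 4) σ k) - c) ^ 2
          = (∑ k : Fin (m + 4), cycZ (m + 4) σ k) ^ 2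
            - 2 * c * (∑ k : Fin (m + 4), cycZ (m + 4) σ k) + c ^ 2 := by
      intro c σ; ring
    rw [Finset.sum_congr rfl (fun σ _ => hexp _ σ), Finset.sum_add_distrib,
      Finset.sum_sub_distrib, ← Finset.mul_sum, Finset.sum_const, Finset.card_univ,
      Fintype.card_perm, Fintype.card_fin, sum_sq_total, sum_cycZ_total, hT, hQ,
      nsmul_eq_mul, hfac1, hfac2, hfac4]
    push_cast
    rw [div_eq_iff (by positivity)]
    ring
end
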